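/- arXiv:1310.5093 — 10 statements merged into one kernel-verified Lean document; each statement's English description precedes it below -/
import Mathlib

section
/- Let n ≥ 1 be an integer and let p be a real polynomial of degree m. Then for every x ≥ 0 the series Σ_{k=0}^∞ p(k/n)·v_{k,n}(x) converges absolutely, and (V_n p)(x) = Σ_{r=0}^{m} θ_r^{(n)}(x)·p^{(r)}(x), where p^{(r)} denotes the r-th derivative of p. In other words, on polynomials the Baskakov operator admits the differential representation V_n = Σ_{r≥0} θ_r^{(n)} D^r with the coefficients θ_r^{(n)} given by the stated recurrence. -/
open Filter Topology Finset

/-- Baskakov basis functions `v_{k,n}(x) = C(n+k-1, k) x^k (1+x)^{-(n+k)}`. -/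
noncomputable def baskakovBasis (n k : ℕ) (x : ℝ) : ℝ :=
  (Nat.choose (n + k - 1) k : ℝ) * x ^ k / (1 + x) ^ (n + k)

/-- Baskakov operator `(V_n f)(x) = Σ_{k≥0} f(k/n) v_{k,n}(x)`. -/
noncomputable def baskakov (n : ℕ) (f : ℝ → ℝ) (x : ℝ) : ℝ :=
  ∑' k : ℕ, f ((k : ℝ) / n) * baskakovBasis n k x

/-- Polynomials θ_r^{(n)}: θ_0 = 1, θ_1 = 0 and
`n (r+1) θ_{r+1} = X (θ_r' + θ_{r-1})` for r ≥ 1, with X = x(1+x). -/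
noncomputable def theta (n : ℕ) : ℕ → ℝ → ℝ
  | 0 => fun _ => 1
  | 1 => fun _ => 0
  | r + 2 => fun x =>
      x * (1 + x) * (deriv (theta n (r + 1)) x + theta n r x) / (n * (r + 2))

/-- Polynomials η_r^{(n)}: η_0 = 1, η_1 = 0 and
`(n+r)(r+1) η_{r+1} = -r(1+2x) η_r - X η_{r-1}` for r ≥ 1, with X = x(1+x). -/
noncomputable def eta (n : ℕ) : ℕ → ℝ → ℝ
  | 0 => fun _ => 1
  | 1 => fun _ => 0
  | r + 2 => fun x =>
      (-((r + 1 : ℝ) * (1 + 2 * x) * eta n (r + 1) x) - x * (1 + x) * eta n r x) /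
        (((n : ℝ) + (r + 1)) * (r + 2))

/-- Rising factorial `(n)_r = n (n+1) ⋯ (n+r-1)`. -/
def risingFactorial (n r : ℕ) : ℕ := ∏ i ∈ Finset.range r, (n + i)

namespace BaskakovAux


/-- derivative of the basis function -/
noncomputable def dbb (n k : ℕ) (x : ℝ) : ℝ :=
  (Nat.choose (n + k - 1) k : ℝ) *
      ((k : ℝ) * x ^ (k - 1) * (1 + x) - ((n + k : ℕ) : ℝ) * x ^ k) / (1 + x) ^ (n + k + 1)

noncomputable def gfun (n r k : ℕ) (x : ℝ) : ℝ := ((k : ℝ) / n - x) ^ r * baskakovBasis n k x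

noncomputable def gfun' (n r k : ℕ) (x : ℝ) : ℝ :=
  (r : ℝ) * ((k : ℝ) / n - x) ^ (r - 1) * (-1) * baskakovBasis n k x +
    ((k : ℝ) / n - x) ^ r * dbb n k x

lemma hasDerivAt_bb (n k : ℕ) (hn : 1 ≤ n) {x : ℝ} (hx : -1 < x) :
    HasDerivAt (fun y => baskakovBasis n k y) (dbb n k x) x := by
  have h1x : (1 + x) ≠ 0 := by linarith
  have hD : HasDerivAt (fun y : ℝ => (1 + y) ^ (n + k))
      (((n + k : ℕ) : ℝ) * (1 + x) ^ (n + k - 1)) x := by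
    simpa using ((hasDerivAt_id x).const_add 1).fun_pow (n + k)
  have hN : HasDerivAt (fun y : ℝ => (Nat.choose (n + k - 1) k : ℝ) * y ^ k)
      ((Nat.choose (n + k - 1) k : ℝ) * ((k : ℝ) * x ^ (k - 1))) x := by
    simpa [mul_comm] using (hasDerivAt_pow k x).const_mul (Nat.choose (n + k - 1) k : ℝ)
  have := hN.fun_div hD (pow_ne_zero _ h1x)
  refine this.congr_deriv (Eq.symm ?_)
  obtain ⟨m, hm⟩ : ∃ m, n + k = m + 1 := ⟨n + k - 1, by omega⟩
  rw [dbb, hm]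
  simp only [Nat.add_sub_cancel]
  field_simp
  ring

lemma hasDerivAt_gfun (n r k : ℕ) (hn : 1 ≤ n) {x : ℝ} (hx : -1 < x) :
    HasDerivAt (gfun n r k) (gfun' n r k x) x := by
  have h1 : HasDerivAt (fun y : ℝ => ((k : ℝ) / n - y) ^ r)
      ((r : ℝ) * ((k : ℝ) / n - x) ^ (r - 1) * (-1)) x := by
    simpa using ((hasDerivAt_id x).const_sub ((k : ℝ) / n)).fun_pow r
  exact h1.mul (hasDerivAt_bb n k hn hx)

lemma xdbb (n k : ℕ) (hn : 1 ≤ n) {x : ℝ} (hx : -1 < x) :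
    x * (1 + x) * dbb n k x = ((k : ℝ) - n * x) * baskakovBasis n k x := by
  have h1x : (1 + x) ≠ 0 := by linarith
  cases k with
  | zero =>
    simp only [dbb, baskakovBasis, Nat.add_zero, pow_zero, Nat.cast_zero]
    field_simp
    ring
  | succ k' =>
    simp only [dbb, baskakovBasis, Nat.succ_sub_one]
    field_simp
    push_cast; ring

lemma keyalg (n r k : ℕ) (hn : 1 ≤ n) {x : ℝ} (hx : -1 < x) :
    (n : ℝ) * gfun n (r + 2) k x =
      x * (1 + x) * gfun' n (r + 1) k x + ((r : ℝ) + 1) * (x * (1 + x)) * gfun n r k x := by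
  have hd := xdbb n k hn hx
  have hn0 : (n : ℝ) ≠ 0 := Nat.cast_ne_zero.2 (by omega)
  have hpsi : (n : ℝ) * ((k : ℝ) / n - x) = (k : ℝ) - n * x := by field_simp
  simp only [gfun, gfun', Nat.add_sub_cancel]
  push_cast
  linear_combination (((k : ℝ) / n - x) ^ (r + 1) * baskakovBasis n k x) * hpsi -
    ((k : ℝ) / n - x) ^ (r + 1) * hd

lemma choose_bound (n k : ℕ) (hn : 1 ≤ n) :
    ((n + k - 1).choose k : ℝ) ≤ (((n : ℝ) + 1) * ((k : ℝ) + 1)) ^ n := by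
  have h1 : (n + k - 1).choose k = (k + (n - 1)).choose (n - 1) := by
    rw [show n + k - 1 = k + (n - 1) from by omega,
      ← Nat.choose_symm (Nat.le_add_right k (n - 1)), Nat.add_sub_cancel_left]
  have h2 : (k + (n - 1)).choose (n - 1) ≤ (k + (n - 1)) ^ (n - 1) := Nat.choose_le_pow _ _
  have h3 : (k + (n - 1)) ^ (n - 1) ≤ ((n + 1) * (k + 1)) ^ n := by
    have hb : k + (n - 1) ≤ (n + 1) * (k + 1) := by
      calc k + (n - 1) ≤ k + n := by omega
        _ ≤ (n + 1) * (k + 1) := by nlinarith [Nat.zero_le (n * k)]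
    calc (k + (n - 1)) ^ (n - 1) ≤ ((n + 1) * (k + 1)) ^ (n - 1) :=
          Nat.pow_le_pow_left hb _
      _ ≤ ((n + 1) * (k + 1)) ^ n := Nat.pow_le_pow_right (by nlinarith) (by omega)
  calc ((n + k - 1).choose k : ℝ) ≤ (((n + 1) * (k + 1) : ℕ) ^ n : ℕ) := by
        exact_mod_cast (h1 ▸ h2).trans h3
    _ = (((n : ℝ) + 1) * ((k : ℝ) + 1)) ^ n := by push_cast; ring

lemma bb_bound (n k : ℕ) (hn : 1 ≤ n) {c y : ℝ} (h34 : (3 : ℝ) / 4 ≤ 1 + y)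
    (hyc : |y| ≤ c * (1 + y)) (hc3 : (3 : ℝ)⁻¹ ≤ c) :
    |baskakovBasis n k y| ≤ ((4 / 3) ^ n * ((n : ℝ) + 1) ^ n) * ((k : ℝ) + 1) ^ n * c ^ k := by
  have h1y : (0 : ℝ) < 1 + y := by linarith
  have hc0 : (0 : ℝ) < c := lt_of_lt_of_le (by norm_num) hc3
  have hych : |y| ^ k ≤ c ^ k * (1 + y) ^ k := by
    rw [← mul_pow]; exact pow_le_pow_left₀ (abs_nonneg y) hyc k
  have h43 : (1 : ℝ) ≤ (4 / 3) ^ n * (1 + y) ^ n := by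
    rw [← mul_pow]; exact one_le_pow₀ (by nlinarith)
  have hch := choose_bound n k hn
  calc |baskakovBasis n k y|
      = ((n + k - 1).choose k : ℝ) * |y| ^ k / (1 + y) ^ (n + k) := by
        rw [baskakovBasis, abs_div, abs_mul, abs_pow, abs_of_pos (pow_pos h1y _),
          abs_of_nonneg (Nat.cast_nonneg _)]
    _ ≤ ((n + k - 1).choose k : ℝ) * (c ^ k * (1 + y) ^ k) / (1 + y) ^ (n + k) := by
        gcongr
    _ = ((n + k - 1).choose k : ℝ) * c ^ k / (1 + y) ^ n := by
        rw [pow_add]; field_simp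
    _ ≤ ((n + k - 1).choose k : ℝ) * c ^ k / (1 + y) ^ n * ((4 / 3) ^ n * (1 + y) ^ n) := by
        exact le_mul_of_one_le_right (by positivity) h43
    _ = ((n + k - 1).choose k : ℝ) * c ^ k * (4 / 3) ^ n := by
        field_simp
    _ ≤ (((n : ℝ) + 1) * ((k : ℝ) + 1)) ^ n * c ^ k * (4 / 3) ^ n := by
        gcongr
    _ = ((4 / 3) ^ n * ((n : ℝ) + 1) ^ n) * ((k : ℝ) + 1) ^ n * c ^ k := by
        rw [mul_pow]; ring

lemma dbb_bound (n k : ℕ) (hn : 1 ≤ n) {c y : ℝ} (h34 : (3 : ℝ) / 4 ≤ 1 + y)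
    (hyc : |y| ≤ c * (1 + y)) (hc3 : (3 : ℝ)⁻¹ ≤ c) :
    |dbb n k y| ≤ (4 * (4 / 3) ^ (n + 1) * ((n : ℝ) + 1) ^ (n + 1)) * ((k : ℝ) + 1) ^ (n + 1) * c ^ k := by
  have h1y : (0 : ℝ) < 1 + y := by linarith
  have hc0 : (0 : ℝ) < c := lt_of_lt_of_le (by norm_num) hc3
  have hch := choose_bound n k hn
  have hA : |(k : ℝ) * y ^ (k - 1) * (1 + y)| ≤ (k : ℝ) * (3 * c ^ k) * (1 + y) ^ k := by
    rcases k with _ | k'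
    · simp
    · have hy' : |y| ^ k' ≤ c ^ k' * (1 + y) ^ k' := by
        rw [← mul_pow]; exact pow_le_pow_left₀ (abs_nonneg y) hyc k'
      have hcc : c ^ k' ≤ 3 * c ^ (k' + 1) := by
        rw [pow_succ]; nlinarith [pow_pos hc0 k']
      calc |((k' + 1 : ℕ) : ℝ) * y ^ (k' + 1 - 1) * (1 + y)|
          = ((k' + 1 : ℕ) : ℝ) * |y| ^ k' * (1 + y) := by
            rw [abs_mul, abs_mul, abs_pow, abs_of_pos h1y,
              abs_of_nonneg (Nat.cast_nonneg _), Nat.add_sub_cancel]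
        _ ≤ ((k' + 1 : ℕ) : ℝ) * (c ^ k' * (1 + y) ^ k') * (1 + y) := by gcongr
        _ = ((k' + 1 : ℕ) : ℝ) * c ^ k' * (1 + y) ^ (k' + 1) := by rw [pow_succ]; ring
        _ ≤ ((k' + 1 : ℕ) : ℝ) * (3 * c ^ (k' + 1)) * (1 + y) ^ (k' + 1) := by gcongr
  have hB : |((n + k : ℕ) : ℝ) * y ^ k| ≤ ((n : ℝ) + k) * (c ^ k * (1 + y) ^ k) := by
    rw [abs_mul, abs_pow, abs_of_nonneg (Nat.cast_nonneg _)]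
    push_cast
    have h : |y| ^ k ≤ c ^ k * (1 + y) ^ k := by
      rw [← mul_pow]; exact pow_le_pow_left₀ (abs_nonneg y) hyc k
    exact mul_le_mul_of_nonneg_left h (by positivity)
  have hnum : |(k : ℝ) * y ^ (k - 1) * (1 + y) - ((n + k : ℕ) : ℝ) * y ^ k|
      ≤ (4 * ((n : ℝ) + 1) * ((k : ℝ) + 1)) * (c ^ k * (1 + y) ^ k) := by
    have t1 := (abs_sub ((k : ℝ) * y ^ (k - 1) * (1 + y)) (((n + k : ℕ) : ℝ) * y ^ k))
    have hk0 : (0 : ℝ) ≤ (k : ℝ) := Nat.cast_nonneg k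
    have hn0 : (0 : ℝ) ≤ (n : ℝ) := Nat.cast_nonneg n
    have hp : (0 : ℝ) ≤ c ^ k * (1 + y) ^ k := by positivity
    have t2 : (k : ℝ) * (3 * c ^ k) * (1 + y) ^ k + ((n : ℝ) + k) * (c ^ k * (1 + y) ^ k)
        ≤ (4 * ((n : ℝ) + 1) * ((k : ℝ) + 1)) * (c ^ k * (1 + y) ^ k) := by
      have e : (k : ℝ) * (3 * c ^ k) * (1 + y) ^ k = (3 * k) * (c ^ k * (1 + y) ^ k) := by ring
      rw [e]
      have : (3 * (k : ℝ)) + ((n : ℝ) + k) ≤ 4 * ((n : ℝ) + 1) * ((k : ℝ) + 1) := by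
        nlinarith [mul_nonneg hn0 hk0]
      nlinarith [hp, mul_le_mul_of_nonneg_right this hp]
    linarith [hA, hB, t1, t2]
  have hden : (1 + y) ^ (n + k + 1) = (1 + y) ^ (n + 1) * (1 + y) ^ k := by
    rw [← pow_add]; congr 1; omega
  have h43 : (1 : ℝ) ≤ (4 / 3) ^ (n + 1) * (1 + y) ^ (n + 1) := by
    rw [← mul_pow]; exact one_le_pow₀ (by nlinarith)
  rw [dbb, abs_div, abs_mul, abs_of_nonneg (Nat.cast_nonneg _), abs_of_pos (pow_pos h1y _),
    div_le_iff₀ (pow_pos h1y _)]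
  calc ((n + k - 1).choose k : ℝ) * |(k : ℝ) * y ^ (k - 1) * (1 + y) - ((n + k : ℕ) : ℝ) * y ^ k|
      ≤ (((n : ℝ) + 1) * ((k : ℝ) + 1)) ^ n * ((4 * ((n : ℝ) + 1) * ((k : ℝ) + 1)) * (c ^ k * (1 + y) ^ k)) :=
        mul_le_mul hch hnum (abs_nonneg _) (by positivity)
    _ = 4 * ((n : ℝ) + 1) ^ (n + 1) * ((k : ℝ) + 1) ^ (n + 1) * c ^ k * (1 + y) ^ k := by
        rw [mul_pow]; ring
    _ ≤ 4 * ((n : ℝ) + 1) ^ (n + 1) * ((k : ℝ) + 1) ^ (n + 1) * c ^ k * (1 + y) ^ k *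
          ((4 / 3) ^ (n + 1) * (1 + y) ^ (n + 1)) := le_mul_of_one_le_right (by positivity) h43
    _ = 4 * (4 / 3) ^ (n + 1) * ((n : ℝ) + 1) ^ (n + 1) * ((k : ℝ) + 1) ^ (n + 1) * c ^ k *
          (1 + y) ^ (n + k + 1) := by rw [hden]; ring

lemma psi_le (n k : ℕ) (hn : 1 ≤ n) {M y : ℝ} (hM : |y| + 1 ≤ M) :
    |(k : ℝ) / n - y| ≤ M * ((k : ℝ) + 1) := by
  have h1 : |(k : ℝ) / n - y| ≤ (k : ℝ) / n + |y| := by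
    calc |(k : ℝ) / n - y| ≤ |(k : ℝ) / n| + |y| := abs_sub _ _
      _ = (k : ℝ) / n + |y| := by rw [abs_of_nonneg (by positivity)]
  have h2 : (k : ℝ) / n ≤ k := by
    apply div_le_self (Nat.cast_nonneg k)
    exact_mod_cast hn
  have hk0 : (0 : ℝ) ≤ (k : ℝ) := Nat.cast_nonneg k
  nlinarith [abs_nonneg y]

lemma gfun_bound (n r k : ℕ) (hn : 1 ≤ n) {c M y : ℝ} (h34 : (3 : ℝ) / 4 ≤ 1 + y)
    (hyc : |y| ≤ c * (1 + y)) (hc3 : (3 : ℝ)⁻¹ ≤ c) (hM : |y| + 1 ≤ M) :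
    |gfun n r k y| ≤ (M ^ r * ((4 / 3) ^ n * ((n : ℝ) + 1) ^ n)) * ((k : ℝ) + 1) ^ (r + n) * c ^ k := by
  have hc0 : (0 : ℝ) < c := lt_of_lt_of_le (by norm_num) hc3
  have hM0 : (0 : ℝ) ≤ M := le_trans (by positivity) hM
  have hbb := bb_bound n k hn h34 hyc hc3
  have hpsi := psi_le n k hn hM
  calc |gfun n r k y| = |(k : ℝ) / n - y| ^ r * |baskakovBasis n k y| := by
        rw [gfun, abs_mul, abs_pow]
    _ ≤ (M * ((k : ℝ) + 1)) ^ r * (((4 / 3) ^ n * ((n : ℝ) + 1) ^ n) * ((k : ℝ) + 1) ^ n * c ^ k) :=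
        mul_le_mul (pow_le_pow_left₀ (abs_nonneg _) hpsi r) hbb (abs_nonneg _) (by positivity)
    _ = (M ^ r * ((4 / 3) ^ n * ((n : ℝ) + 1) ^ n)) * ((k : ℝ) + 1) ^ (r + n) * c ^ k := by
        rw [mul_pow, pow_add]; ring

lemma gfun'_bound (n r k : ℕ) (hn : 1 ≤ n) {c M y : ℝ} (h34 : (3 : ℝ) / 4 ≤ 1 + y)
    (hyc : |y| ≤ c * (1 + y)) (hc3 : (3 : ℝ)⁻¹ ≤ c) (hM : |y| + 1 ≤ M) :
    |gfun' n r k y| ≤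
      ((r : ℝ) * M ^ r * ((4 / 3) ^ n * ((n : ℝ) + 1) ^ n) +
        M ^ r * (4 * (4 / 3) ^ (n + 1) * ((n : ℝ) + 1) ^ (n + 1))) *
        ((k : ℝ) + 1) ^ (r + n + 1) * c ^ k := by
  have hc0 : (0 : ℝ) < c := lt_of_lt_of_le (by norm_num) hc3
  have hM1 : (1 : ℝ) ≤ M := le_trans (by nlinarith [abs_nonneg y]) hM
  have hM0 : (0 : ℝ) ≤ M := by linarith
  have hbb := bb_bound n k hn h34 hyc hc3
  have hdbb := dbb_bound n k hn h34 hyc hc3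
  have hpsi := psi_le n k hn hM
  have hMk1 : (1 : ℝ) ≤ M * ((k : ℝ) + 1) := by nlinarith [Nat.cast_nonneg (α := ℝ) k]
  have hpow1 : |(k : ℝ) / n - y| ^ (r - 1) ≤ (M * ((k : ℝ) + 1)) ^ r := by
    calc |(k : ℝ) / n - y| ^ (r - 1) ≤ (M * ((k : ℝ) + 1)) ^ (r - 1) :=
          pow_le_pow_left₀ (abs_nonneg _) hpsi _
      _ ≤ (M * ((k : ℝ) + 1)) ^ r := pow_le_pow_right₀ hMk1 (Nat.sub_le r 1)
  have hpow2 : |(k : ℝ) / n - y| ^ r ≤ (M * ((k : ℝ) + 1)) ^ r :=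
    pow_le_pow_left₀ (abs_nonneg _) hpsi r
  have hk1 : (1 : ℝ) ≤ (k : ℝ) + 1 := by nlinarith [Nat.cast_nonneg (α := ℝ) k]
  calc |gfun' n r k y|
      ≤ |(r : ℝ) * ((k : ℝ) / n - y) ^ (r - 1) * (-1) * baskakovBasis n k y| +
        |((k : ℝ) / n - y) ^ r * dbb n k y| := abs_add_le _ _
    _ = (r : ℝ) * |(k : ℝ) / n - y| ^ (r - 1) * |baskakovBasis n k y| +
        |(k : ℝ) / n - y| ^ r * |dbb n k y| := by
        rw [abs_mul, abs_mul, abs_mul, abs_mul, abs_neg, abs_one, abs_pow, abs_pow,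
          abs_of_nonneg (Nat.cast_nonneg _)]
        ring
    _ ≤ (r : ℝ) * ((M * ((k : ℝ) + 1)) ^ r) * (((4 / 3) ^ n * ((n : ℝ) + 1) ^ n) * ((k : ℝ) + 1) ^ n * c ^ k) +
        (M * ((k : ℝ) + 1)) ^ r *
          ((4 * (4 / 3) ^ (n + 1) * ((n : ℝ) + 1) ^ (n + 1)) * ((k : ℝ) + 1) ^ (n + 1) * c ^ k) := by
        have hco : (0:ℝ) ≤ (4 / 3) ^ n * ((n : ℝ) + 1) ^ n * ((k : ℝ) + 1) ^ n * c ^ k := by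
          positivity
        refine add_le_add ?_ ?_
        · refine mul_le_mul (mul_le_mul_of_nonneg_left hpow1 (Nat.cast_nonneg r)) hbb
            (abs_nonneg _) ?_
          exact mul_nonneg (Nat.cast_nonneg r) (pow_nonneg (by nlinarith) r)
        · exact mul_le_mul hpow2 hdbb (abs_nonneg _) (pow_nonneg (by nlinarith) r)
    _ = ((r : ℝ) * M ^ r * ((4 / 3) ^ n * ((n : ℝ) + 1) ^ n)) * (((k : ℝ) + 1) ^ (r + n) * c ^ k) +
        (M ^ r * (4 * (4 / 3) ^ (n + 1) * ((n : ℝ) + 1) ^ (n + 1))) * (((k : ℝ) + 1) ^ (r + n + 1) * c ^ k) := by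
        rw [mul_pow, pow_add, pow_add, pow_add]; ring
    _ ≤ ((r : ℝ) * M ^ r * ((4 / 3) ^ n * ((n : ℝ) + 1) ^ n)) * (((k : ℝ) + 1) ^ (r + n + 1) * c ^ k) +
        (M ^ r * (4 * (4 / 3) ^ (n + 1) * ((n : ℝ) + 1) ^ (n + 1))) * (((k : ℝ) + 1) ^ (r + n + 1) * c ^ k) := by
        have hmono : ((k : ℝ) + 1) ^ (r + n) * c ^ k ≤ ((k : ℝ) + 1) ^ (r + n + 1) * c ^ k :=
          mul_le_mul_of_nonneg_right (pow_le_pow_right₀ hk1 (Nat.le_succ _))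
            (pow_nonneg hc0.le k)
        refine add_le_add (mul_le_mul_of_nonneg_left hmono ?_) le_rfl
        exact mul_nonneg (mul_nonneg (Nat.cast_nonneg r) (pow_nonneg hM0 r)) (by positivity)
    _ = ((r : ℝ) * M ^ r * ((4 / 3) ^ n * ((n : ℝ) + 1) ^ n) +
        M ^ r * (4 * (4 / 3) ^ (n + 1) * ((n : ℝ) + 1) ^ (n + 1))) *
        ((k : ℝ) + 1) ^ (r + n + 1) * c ^ k := by ring

lemma summable_aux (m : ℕ) {c : ℝ} (hc0 : 0 < c) (hc1 : c < 1) (A : ℝ) :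
    Summable (fun k : ℕ => A * ((k : ℝ) + 1) ^ m * c ^ k) := by
  have h : Summable (fun k : ℕ => (k : ℝ) ^ m * c ^ k) :=
    summable_pow_mul_geometric_of_norm_lt_one m
      (by rw [Real.norm_eq_abs, abs_of_pos hc0]; exact hc1)
  have h2 : Summable (fun k : ℕ => ((k + 1 : ℕ) : ℝ) ^ m * c ^ (k + 1)) :=
    (summable_nat_add_iff 1).2 h
  refine (h2.mul_left (A * c⁻¹)).congr fun k => ?_
  push_cast
  rw [pow_succ]
  field_simp

noncomputable def Tpoly (n : ℕ) : ℕ → Polynomial ℝ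
  | 0 => 1
  | 1 => 0
  | r + 2 => ((n : ℝ) * ((r : ℝ) + 2))⁻¹ •
      (Polynomial.X * (1 + Polynomial.X) * ((Tpoly n (r + 1)).derivative + Tpoly n r))

lemma theta_eq_aux (n : ℕ) : ∀ r, theta n r = (fun x => (Tpoly n r).eval x) ∧
    theta n (r + 1) = (fun x => (Tpoly n (r + 1)).eval x) := by
  intro r
  induction r with
  | zero =>
    constructor <;> funext x <;> simp [theta, Tpoly]
  | succ r ih =>
    refine ⟨ih.2, ?_⟩
    funext x
    show theta n (r + 2) x = _
    have hd : deriv (theta n (r + 1)) x = (Tpoly n (r + 1)).derivative.eval x := by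
      rw [ih.2, Polynomial.deriv]
    have hr : theta n r x = (Tpoly n r).eval x := by rw [ih.1]
    simp only [theta, hd, hr, Tpoly, Polynomial.eval_smul, Polynomial.eval_mul,
      Polynomial.eval_add, Polynomial.eval_one, Polynomial.eval_X, smul_eq_mul]
    push_cast
    ring

lemma setup {x₀ : ℝ} (hx : -4⁻¹ < x₀) :
    ∃ R c M : ℝ, x₀ ∈ Set.Ioo (-4⁻¹ : ℝ) R ∧ (3 : ℝ)⁻¹ ≤ c ∧ c < 1 ∧ 1 ≤ M ∧
      ∀ y ∈ Set.Ioo (-4⁻¹ : ℝ) R, (3 : ℝ) / 4 ≤ 1 + y ∧ |y| ≤ c * (1 + y) ∧ |y| + 1 ≤ M := by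
  set R : ℝ := max 1 (x₀ + 1) with hR
  have hR1 : (1 : ℝ) ≤ R := le_max_left _ _
  have hx₀R : x₀ < R := lt_of_lt_of_le (lt_add_one x₀) (le_max_right _ _)
  refine ⟨R, max 3⁻¹ (R / (1 + R)), R + 1, ⟨hx, hx₀R⟩, le_max_left _ _, ?_, by linarith, ?_⟩
  · refine max_lt (by norm_num) ?_
    rw [div_lt_one (by linarith)]
    linarith
  · intro y hy
    obtain ⟨hy1, hy2⟩ := hy
    have h1y : (3 : ℝ) / 4 < 1 + y := by
      have : -(4 : ℝ)⁻¹ < y := hy1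
      norm_num at this ⊢
      linarith
    have hyR : |y| ≤ R := by
      rw [abs_le]
      constructor
      · have : -(4 : ℝ)⁻¹ < y := hy1
        norm_num at this; linarith
      · linarith
    refine ⟨le_of_lt h1y, ?_, by linarith⟩
    rcases le_or_gt 0 y with hy0 | hy0
    · have h1 : y ≤ (R / (1 + R)) * (1 + y) := by
        rw [div_mul_eq_mul_div, le_div_iff₀ (by linarith)]
        nlinarith [abs_le.1 hyR]
      calc |y| = y := abs_of_nonneg hy0
        _ ≤ (R / (1 + R)) * (1 + y) := h1
        _ ≤ max 3⁻¹ (R / (1 + R)) * (1 + y) :=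
            mul_le_mul_of_nonneg_right (le_max_right _ _) (by linarith)
    · have h1 : |y| = -y := abs_of_neg hy0
      have h2 : -y < 4⁻¹ := by
        have : -(4 : ℝ)⁻¹ < y := hy1
        linarith
      have h3 : (3 : ℝ)⁻¹ * (1 + y) ≤ max 3⁻¹ (R / (1 + R)) * (1 + y) :=
        mul_le_mul_of_nonneg_right (le_max_left _ _) (by linarith)
      have h4 : (4 : ℝ)⁻¹ ≤ (3 : ℝ)⁻¹ * (1 + y) := by
        norm_num
        nlinarith
      linarith

lemma summable_abs_gfun (n r : ℕ) (hn : 1 ≤ n) {x : ℝ} (hx : -4⁻¹ < x) :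
    Summable (fun k => |gfun n r k x|) := by
  obtain ⟨R, c, M, hxm, hc3, hc1, hM1, hall⟩ := setup hx
  obtain ⟨h34, hyc, hyM⟩ := hall x hxm
  have hc0 : (0 : ℝ) < c := lt_of_lt_of_le (by norm_num) hc3
  refine Summable.of_nonneg_of_le (fun k => abs_nonneg _)
    (fun k => gfun_bound n r k hn h34 hyc hc3 hyM) ?_
  exact summable_aux (r + n) hc0 hc1 _

lemma hasSum_bb (n : ℕ) (hn : 1 ≤ n) {x : ℝ} (hx : -4⁻¹ < x) :
    HasSum (fun k => baskakovBasis n k x) 1 := by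
  have hx' : -(4 : ℝ)⁻¹ < x := hx
  have h1x : (0 : ℝ) < 1 + x := by norm_num at hx'; linarith
  set q : ℝ := x / (1 + x) with hq
  have habs : ‖q‖ < 1 := by
    rw [Real.norm_eq_abs, hq, abs_div, abs_of_pos h1x, div_lt_one h1x]
    rcases abs_cases x with ⟨h, _⟩ | ⟨h, _⟩
    · linarith
    · norm_num at hx'; linarith
  have key := hasSum_choose_mul_geometric_of_norm_lt_one (n - 1) habs
  have h1q : 1 - q = (1 + x)⁻¹ := by
    rw [hq]; field_simp; ring
  have H2 := key.mul_right (((1 + x) ^ n)⁻¹)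
  have hval : 1 / (1 - q) ^ (n - 1 + 1) * ((1 + x) ^ n)⁻¹ = 1 := by
    rw [h1q, show n - 1 + 1 = n from by omega, inv_pow, one_div, inv_inv]
    field_simp
  rw [hval] at H2
  have hfun : (fun k : ℕ => baskakovBasis n k x) =
      fun k : ℕ => ((k + (n - 1)).choose (n - 1) : ℝ) * q ^ k * ((1 + x) ^ n)⁻¹ := by
    funext k
    have hch : (n + k - 1).choose k = (k + (n - 1)).choose (n - 1) := by
      rw [show n + k - 1 = k + (n - 1) from by omega,
        ← Nat.choose_symm (Nat.le_add_right k (n - 1)), Nat.add_sub_cancel_left]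
    rw [baskakovBasis, hch, hq, div_pow, pow_add]
    simp only [div_eq_mul_inv, mul_inv]
    ring
  rw [hfun]
  exact H2

lemma hasSum_mul_bb (n : ℕ) (hn : 1 ≤ n) {x : ℝ} (hx : -4⁻¹ < x) :
    HasSum (fun k : ℕ => (k : ℝ) * baskakovBasis n k x) ((n : ℝ) * x) := by
  have hx' : -(4 : ℝ)⁻¹ < x := hx
  have h1x : (0 : ℝ) < 1 + x := by norm_num at hx'; linarith
  have hkey : ∀ k : ℕ, ((k : ℝ) + 1) * baskakovBasis n (k + 1) x =
      (n : ℝ) * x * baskakovBasis (n + 1) k x := by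
    intro k
    have e1 : n + (k + 1) - 1 = n + k := by omega
    have e2 : n + 1 + k - 1 = n + k := by omega
    have e3 : n + (k + 1) = n + 1 + k := by omega
    have hnat : (n + k).choose (k + 1) * (k + 1) = (n + k).choose k * n := by
      have h := Nat.choose_succ_right_eq (n + k) k
      rwa [Nat.add_sub_cancel] at h
    have hcast : ((n + k).choose (k + 1) : ℝ) * ((k : ℝ) + 1) =
        ((n + k).choose k : ℝ) * (n : ℝ) := by exact_mod_cast hnat
    rw [baskakovBasis, baskakovBasis, e1, e2, e3]
    rw [mul_div_assoc', mul_div_assoc']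
    congr 1
    rw [pow_succ]
    linear_combination (x ^ k * x) * hcast
  have H0 := (hasSum_bb (n + 1) (by omega) hx).mul_left ((n : ℝ) * x)
  have H1 : HasSum (fun k : ℕ => ((k : ℕ) + 1 : ℕ) * baskakovBasis n (k + 1) x) ((n : ℝ) * x) := by
    have : (fun k : ℕ => (((k : ℕ) + 1 : ℕ) : ℝ) * baskakovBasis n (k + 1) x) =
        fun k : ℕ => (n : ℝ) * x * baskakovBasis (n + 1) k x := by
      funext k; push_cast; exact hkey k
    rw [this]
    simpa using H0
  have H2 : HasSum (fun k : ℕ => (k : ℝ) * baskakovBasis n k x)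
      ((n : ℝ) * x + ∑ i ∈ Finset.range 1, (i : ℝ) * baskakovBasis n i x) :=
    (hasSum_nat_add_iff 1).1 H1
  simpa using H2

lemma hasSum_psi_bb (n : ℕ) (hn : 1 ≤ n) {x : ℝ} (hx : -4⁻¹ < x) :
    HasSum (fun k : ℕ => ((k : ℝ) / n - x) * baskakovBasis n k x) 0 := by
  have hn0 : (n : ℝ) ≠ 0 := Nat.cast_ne_zero.2 (by omega)
  have H := ((hasSum_mul_bb n hn hx).mul_left ((n : ℝ)⁻¹)).sub
    ((hasSum_bb n hn hx).mul_left x)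
  have hfun : (fun k : ℕ => (n : ℝ)⁻¹ * ((k : ℝ) * baskakovBasis n k x) -
      x * baskakovBasis n k x) = fun k : ℕ => ((k : ℝ) / n - x) * baskakovBasis n k x := by
    funext k; field_simp
  have hval : (n : ℝ)⁻¹ * ((n : ℝ) * x) - x * 1 = 0 := by field_simp; ring
  rw [hfun, hval] at H
  exact H

lemma key (n : ℕ) (hn : 1 ≤ n) :
    ∀ r : ℕ, ∀ x : ℝ, -4⁻¹ < x →
      HasSum (fun k => gfun n r k x) ((r.factorial : ℝ) * (Tpoly n r).eval x) := by
  have main : ∀ r : ℕ,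
      (∀ x : ℝ, -4⁻¹ < x →
        HasSum (fun k => gfun n r k x) ((r.factorial : ℝ) * (Tpoly n r).eval x)) ∧
      (∀ x : ℝ, -4⁻¹ < x →
        HasSum (fun k => gfun n (r + 1) k x) (((r + 1).factorial : ℝ) * (Tpoly n (r + 1)).eval x)) := by
    intro r
    induction r with
    | zero =>
      constructor
      · intro x hx
        have := hasSum_bb n hn hx
        have hf : (fun k => gfun n 0 k x) = fun k => baskakovBasis n k x := by
          funext k; simp [gfun]
        rw [hf]
        simpa [Tpoly] using this
      · intro x hx
        have := hasSum_psi_bb n hn hx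
        have hf : (fun k => gfun n 1 k x) = fun k : ℕ => ((k : ℝ) / n - x) * baskakovBasis n k x := by
          funext k; simp [gfun]
        rw [hf]
        simpa [Tpoly] using this
    | succ r ih =>
      refine ⟨ih.2, ?_⟩
      intro x₀ hx₀
      obtain ⟨R, c, M, hxm, hc3, hc1, hM1, hall⟩ := setup hx₀
      have hc0 : (0 : ℝ) < c := lt_of_lt_of_le (by norm_num) hc3
      have hopen : IsOpen (Set.Ioo (-4⁻¹ : ℝ) R) := isOpen_Ioo
      have hpre : IsPreconnected (Set.Ioo (-4⁻¹ : ℝ) R) := isPreconnected_Ioo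
      have hmem1 : ∀ y ∈ Set.Ioo (-4⁻¹ : ℝ) R, (-1 : ℝ) < y := by
        intro y hy
        have := hy.1
        norm_num at this ⊢
        linarith
      set u : ℕ → ℝ := fun k =>
        (((r + 1 : ℕ) : ℝ) * M ^ (r + 1) * ((4 / 3) ^ n * ((n : ℝ) + 1) ^ n) +
          M ^ (r + 1) * (4 * (4 / 3) ^ (n + 1) * ((n : ℝ) + 1) ^ (n + 1))) *
          ((k : ℝ) + 1) ^ (r + 1 + n + 1) * c ^ k with hu_def
      have hu : Summable u := summable_aux _ hc0 hc1 _
      have hder : ∀ (k : ℕ), ∀ y ∈ Set.Ioo (-4⁻¹ : ℝ) R,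
          HasDerivAt (gfun n (r + 1) k) (gfun' n (r + 1) k y) y :=
        fun k y hy => hasDerivAt_gfun n (r + 1) k hn (hmem1 y hy)
      have hbound : ∀ (k : ℕ), ∀ y ∈ Set.Ioo (-4⁻¹ : ℝ) R, ‖gfun' n (r + 1) k y‖ ≤ u k := by
        intro k y hy
        obtain ⟨h34, hyc, hyM⟩ := hall y hy
        rw [Real.norm_eq_abs]
        exact gfun'_bound n (r + 1) k hn h34 hyc hc3 hyM
      have hsum0 : Summable (fun k => gfun n (r + 1) k x₀) := (ih.2 x₀ hx₀).summable
      have HD : HasDerivAt (fun z => ∑' k, gfun n (r + 1) k z)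
          (∑' k, gfun' n (r + 1) k x₀) x₀ :=
        hasDerivAt_tsum_of_isPreconnected hu hopen hpre hder hbound hxm hsum0 hxm
      have heq : (fun z => ∑' k, gfun n (r + 1) k z) =ᶠ[nhds x₀]
          (fun z => ((r + 1).factorial : ℝ) * (Tpoly n (r + 1)).eval z) := by
        filter_upwards [hopen.mem_nhds hxm] with z hz
        exact (ih.2 z hz.1).tsum_eq
      have HP : HasDerivAt (fun z => ((r + 1).factorial : ℝ) * (Tpoly n (r + 1)).eval z)
          (((r + 1).factorial : ℝ) * (Tpoly n (r + 1)).derivative.eval x₀) x₀ :=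
        ((Tpoly n (r + 1)).hasDerivAt x₀).const_mul _
      have HD2 : HasDerivAt (fun z => ∑' k, gfun n (r + 1) k z)
          (((r + 1).factorial : ℝ) * (Tpoly n (r + 1)).derivative.eval x₀) x₀ :=
        HP.congr_of_eventuallyEq heq
      have hDval : ∑' k, gfun' n (r + 1) k x₀ =
          ((r + 1).factorial : ℝ) * (Tpoly n (r + 1)).derivative.eval x₀ := HD.unique HD2
      have hsum' : Summable (fun k => gfun' n (r + 1) k x₀) :=
        Summable.of_norm_bounded hu (fun k => hbound k x₀ hxm)
      have HS' : HasSum (fun k => gfun' n (r + 1) k x₀)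
          (((r + 1).factorial : ℝ) * (Tpoly n (r + 1)).derivative.eval x₀) :=
        hDval ▸ hsum'.hasSum
      have hx1 : (-1 : ℝ) < x₀ := hmem1 x₀ hxm
      have hn0 : (n : ℝ) ≠ 0 := Nat.cast_ne_zero.2 (by omega)
      have HC := (((HS'.mul_left (x₀ * (1 + x₀))).add
        ((ih.1 x₀ hx₀).mul_left (((r : ℝ) + 1) * (x₀ * (1 + x₀))))).mul_left ((n : ℝ)⁻¹))
      have hfuneq : (fun k => (n : ℝ)⁻¹ * (x₀ * (1 + x₀) * gfun' n (r + 1) k x₀ +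
          ((r : ℝ) + 1) * (x₀ * (1 + x₀)) * gfun n r k x₀)) =
          fun k => gfun n (r + 2) k x₀ := by
        funext k
        have hk := keyalg n r k hn hx1
        field_simp
        linarith [hk]
      rw [hfuneq] at HC
      have hval : (n : ℝ)⁻¹ * (x₀ * (1 + x₀) *
            (((r + 1).factorial : ℝ) * (Tpoly n (r + 1)).derivative.eval x₀) +
          ((r : ℝ) + 1) * (x₀ * (1 + x₀)) * ((r.factorial : ℝ) * (Tpoly n r).eval x₀)) =
          ((r + 2).factorial : ℝ) * (Tpoly n (r + 2)).eval x₀ := by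
        have hT : (Tpoly n (r + 2)).eval x₀ = ((n : ℝ) * ((r : ℝ) + 2))⁻¹ *
            (x₀ * (1 + x₀) * ((Tpoly n (r + 1)).derivative.eval x₀ + (Tpoly n r).eval x₀)) := by
          simp [Tpoly, Polynomial.eval_smul, smul_eq_mul]
        rw [hT, Nat.factorial_succ (r + 1), Nat.factorial_succ r]
        push_cast
        field_simp
        ring
      rw [hval] at HC
      exact HC
  intro r
  exact (main r).1

end BaskakovAux

open BaskakovAux in
/-- On polynomials, the Baskakov operator admits the differential
representation `V_n = Σ_r θ_r^{(n)} D^r`, the defining series being absolutely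
convergent for every x ≥ 0. -/
theorem baskakov_as_differential_operator (n : ℕ) (hn : 1 ≤ n) (p : Polynomial ℝ)
    (x : ℝ) (hx : 0 ≤ x) :
    Summable (fun k : ℕ => |p.eval ((k : ℝ) / n) * baskakovBasis n k x|) ∧
    baskakov n (fun t => p.eval t) x =
      ∑ r ∈ Finset.range (p.natDegree + 1),
        theta n r x * (Polynomial.derivative^[r] p).eval x := by
  have hx4 : -(4 : ℝ)⁻¹ < x := by norm_num; linarith
  set m := p.natDegree with hm
  have htay : ∀ y : ℝ, p.eval y =
      ∑ r ∈ Finset.range (m + 1), (Polynomial.hasseDeriv r p).eval x * (y - x) ^ r := by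
    intro y
    have h1 : (Polynomial.taylor x p).eval (y - x) = p.eval y := by
      rw [Polynomial.taylor_apply, Polynomial.eval_comp]
      simp
    rw [← h1, Polynomial.eval_eq_sum_range' (n := m + 1)
      (by rw [Polynomial.natDegree_taylor]; omega)]
    exact Finset.sum_congr rfl fun r _ => by rw [Polynomial.taylor_coeff]
  have hterm : ∀ k : ℕ, p.eval ((k : ℝ) / n) * baskakovBasis n k x =
      ∑ r ∈ Finset.range (m + 1),
        (Polynomial.hasseDeriv r p).eval x * gfun n r k x := by
    intro k
    rw [htay ((k : ℝ) / n), Finset.sum_mul]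
    exact Finset.sum_congr rfl fun r _ => by rw [gfun, mul_assoc]
  constructor
  · have hb : ∀ k : ℕ, |p.eval ((k : ℝ) / n) * baskakovBasis n k x| ≤
        ∑ r ∈ Finset.range (m + 1), |(Polynomial.hasseDeriv r p).eval x| * |gfun n r k x| := by
      intro k
      rw [hterm k]
      refine (Finset.abs_sum_le_sum_abs _ _).trans (le_of_eq ?_)
      exact Finset.sum_congr rfl fun r _ => abs_mul _ _
    refine Summable.of_nonneg_of_le (fun k => abs_nonneg _) hb ?_
    exact summable_sum fun r _ => (summable_abs_gfun n r hn hx4).mul_left _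
  · rw [baskakov]
    rw [tsum_congr hterm]
    rw [Summable.tsum_finsetSum (fun r _ => ((key n hn r x hx4).summable).mul_left _)]
    refine Finset.sum_congr rfl fun r _ => ?_
    rw [tsum_mul_left, (key n hn r x hx4).tsum_eq]
    have h1 : theta n r x = (Tpoly n r).eval x := by
      rw [(theta_eq_aux n r).1]
    have h2 : (Polynomial.derivative^[r] p).eval x =
        (r.factorial : ℝ) * (Polynomial.hasseDeriv r p).eval x := by
      rw [← Polynomial.factorial_smul_hasseDeriv r]
      simp [Polynomial.eval_smul]
    rw [h1, h2]
    ring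
end

section
/- For every integer r ≥ 2 and every real x ≥ 0, lim_{n→∞} n^r·θ_{2r-1}^{(n)}(x) = (1+2x)·X^{r-1} / (3·2^{r-1}·(r-2)!), where X = x(1+x). -/
open Filter Topology Finset

open Polynomial in
noncomputable def A : ℕ → ℕ → Polynomial ℝ
  | 0, 0 => 1
  | 0, _ + 1 => 0
  | 1, _ => 0
  | _ + 2, 0 => 0
  | r + 2, j + 1 => C ((r + 2 : ℝ))⁻¹ *
      (X * (1 + X) * (derivative (A (r + 1) j) + A r j))

lemma A_succ (r j : ℕ) : A (r+2) (j+1) = Polynomial.C ((r + 2 : ℝ))⁻¹ *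
    (Polynomial.X * (1 + Polynomial.X) * (Polynomial.derivative (A (r + 1) j) + A r j)) := rfl

lemma A_vanish_low : ∀ m j : ℕ, 2 * j < m → A m j = 0 := by
  intro m
  induction m using Nat.strong_induction_on with
  | _ m ih =>
    match m with
    | 0 => intro j h; omega
    | 1 => intro j _; rfl
    | r + 2 =>
      intro j h
      match j with
      | 0 => rfl
      | j + 1 =>
        rw [A_succ, ih (r+1) (by omega) j (by omega), ih r (by omega) j (by omega)]
        simp

lemma derivXX : Polynomial.derivative (Polynomial.X * (1 + Polynomial.X) : Polynomial ℝ)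
    = 1 + 2 * Polynomial.X := by
  simp [Polynomial.derivative_mul]; ring

lemma A_even : ∀ s : ℕ, A (2*s) s =
    Polynomial.C (((2:ℝ)^s * (Nat.factorial s : ℝ))⁻¹) * (Polynomial.X * (1 + Polynomial.X))^s := by
  intro s
  induction s with
  | zero => simp [show (2*0 : ℕ) = 0 from rfl]; rfl
  | succ s ih =>
    show A (2*s+2) (s+1) = _
    rw [A_succ, A_vanish_low (2*s+1) s (by omega), ih]
    have h2 : ((s:ℝ)+1) ≠ 0 := by positivity
    have h3 : ((Nat.factorial s : ℝ)) ≠ 0 := by positivity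
    apply Polynomial.funext
    intro y
    simp [Nat.factorial_succ]
    field_simp
    push_cast
    ring

lemma A_odd : ∀ s : ℕ, A (2*s+3) (s+2) =
    Polynomial.C ((3 * (2:ℝ)^(s+1) * (Nat.factorial s : ℝ))⁻¹) *
      ((1 + 2 * Polynomial.X) * (Polynomial.X * (1 + Polynomial.X))^(s+1)) := by
  intro s
  induction s with
  | zero =>
    have h21 : A 2 1 = Polynomial.C ((2:ℝ))⁻¹ * (Polynomial.X * (1 + Polynomial.X)) := by
      show A (0+2) (0+1) = _
      rw [A_succ, show A 1 0 = (0:Polynomial ℝ) from rfl, show A 0 0 = (1:Polynomial ℝ) from rfl]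
      norm_num
    show A (1+2) (1+1) = _
    rw [A_succ, h21]
    rw [Polynomial.derivative_C_mul, derivXX]
    apply Polynomial.funext
    intro y
    have : A 1 1 = 0 := rfl
    simp [this]
    norm_num
    ring
  | succ s ih =>
    show A ((2*s+3)+2) ((s+2)+1) = _
    rw [A_succ]
    have he : A (2*s+4) (s+2) = Polynomial.C (((2:ℝ)^(s+2) * (Nat.factorial (s+2) : ℝ))⁻¹) *
        (Polynomial.X * (1 + Polynomial.X))^(s+2) := by
      have := A_even (s+2); rwa [show 2*(s+2) = 2*s+4 from by omega] at this
    rw [show (2*s+3)+1 = 2*s+4 from rfl, he, ih]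
    rw [Polynomial.derivative_C_mul, Polynomial.derivative_pow, derivXX]
    have h3 : ((Nat.factorial s : ℝ)) ≠ 0 := by positivity
    have h4 : ((Nat.factorial (s+2) : ℝ)) ≠ 0 := by positivity
    apply Polynomial.funext
    intro y
    simp [Nat.factorial_succ]
    field_simp
    push_cast
    ring

lemma A_vanish_high : ∀ m j : ℕ, m ≤ j → 1 ≤ j → A m j = 0 := by
  intro m
  induction m using Nat.strong_induction_on with
  | _ m ih =>
    match m with
    | 0 => intro j h h1; match j, h1 with | (j+1), _ => rfl
    | 1 => intro j _ _; rfl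
    | r + 2 =>
      intro j h h1
      match j, h with
      | (j+1), h =>
        rw [A_succ, ih (r+1) (by omega) j (by omega) (by omega),
          ih r (by omega) j (by omega) (by omega)]
        simp

noncomputable def S (n : ℕ) (m : ℕ) : Polynomial ℝ :=
  ∑ j ∈ Finset.range (m+1), Polynomial.C (((n:ℝ)⁻¹)^j) * A m j

lemma S_rec (n r : ℕ) : S n (r+2) = Polynomial.C (((n:ℝ) * ((r:ℝ)+2))⁻¹) *
    (Polynomial.X * (1 + Polynomial.X) *
      (Polynomial.derivative (S n (r+1)) + S n r)) := by
  have hA : A r (r+1) = 0 := by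
    match r with
    | 0 => rfl
    | r + 1 => exact A_vanish_high (r+1) (r+2) (by omega) (by omega)
  unfold S
  rw [Finset.sum_range_succ' (fun j => Polynomial.C (((n:ℝ)⁻¹)^j) * A (r+2) j) (r+2)]
  rw [show A (r+2) 0 = 0 from rfl]
  rw [show (∑ j ∈ Finset.range (r+1), Polynomial.C (((n:ℝ)⁻¹)^j) * A r j)
      = ∑ j ∈ Finset.range (r+2), Polynomial.C (((n:ℝ)⁻¹)^j) * A r j from by
    symm; rw [Finset.sum_range_succ, hA, mul_zero, add_zero]]
  rw [Polynomial.derivative_sum]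
  simp only [Polynomial.derivative_C_mul, mul_zero, add_zero]
  rw [← Finset.sum_add_distrib, Finset.mul_sum, Finset.mul_sum]
  apply Finset.sum_congr rfl
  intro j _
  rw [A_succ]
  have keyC : Polynomial.C (((n:ℝ)⁻¹)^(j+1)) * Polynomial.C (((r:ℝ)+2))⁻¹
      = Polynomial.C (((n:ℝ) * ((r:ℝ)+2))⁻¹) * Polynomial.C (((n:ℝ)⁻¹)^j) := by
    rw [← map_mul, ← map_mul]
    congr 1
    rw [pow_succ, mul_inv]
    ring
  linear_combination (Polynomial.X * (1 + Polynomial.X) *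
    (Polynomial.derivative (A (r+1) j) + A r j)) * keyC

lemma theta_eq (n : ℕ) : ∀ m, theta n m = fun x => (S n m).eval x := by
  intro m
  induction m using Nat.strong_induction_on with
  | _ m ih =>
    match m with
    | 0 =>
      funext x
      show (1:ℝ) = _
      simp [S, show A 0 0 = 1 from rfl]
    | 1 =>
      funext x
      show (0:ℝ) = _
      simp [S, show ∀ j, A 1 j = 0 from fun j => rfl]
    | r + 2 =>
      funext x
      show x * (1 + x) * (deriv (theta n (r + 1)) x + theta n r x) / (n * (r + 2)) = _
      rw [ih (r+1) (by omega), ih r (by omega), S_rec]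
      rw [Polynomial.deriv]
      simp only [Polynomial.eval_mul, Polynomial.eval_C, Polynomial.eval_add,
        Polynomial.eval_one, Polynomial.eval_X]
      push_cast
      ring

lemma theta_rep (n : ℕ) (m : ℕ) (x : ℝ) :
    theta n m x = ∑ j ∈ Finset.range (m+1), (A m j).eval x * ((n:ℝ)⁻¹)^j := by
  rw [theta_eq]
  simp only [S, Polynomial.eval_finset_sum, Polynomial.eval_mul, Polynomial.eval_C]
  exact Finset.sum_congr rfl (fun j _ => by ring)

/-- `lim_{n→∞} n^r θ_{2r-1}^{(n)}(x) = (1+2x) X^{r-1} / (3·2^{r-1}(r-2)!)`. -/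
theorem theta_odd_asymptotics (r : ℕ) (hr : 2 ≤ r) (x : ℝ) (hx : 0 ≤ x) :
    Filter.Tendsto (fun n : ℕ => (n : ℝ) ^ r * theta n (2 * r - 1) x) Filter.atTop
      (nhds ((1 + 2 * x) * (x * (1 + x)) ^ (r - 1) /
        (3 * 2 ^ (r - 1) * (Nat.factorial (r - 2) : ℝ)))) := by
  obtain ⟨s, rfl⟩ : ∃ s, r = s + 2 := ⟨r - 2, by omega⟩
  have e1 : 2 * (s + 2) - 1 = 2 * s + 3 := by omega
  have e2 : s + 2 - 1 = s + 1 := by omega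
  have e3 : s + 2 - 2 = s := by omega
  simp only [e1, e2, e3]
  set L : ℝ := (1 + 2*x) * (x*(1+x))^(s+1) / (3 * 2^(s+1) * (Nat.factorial s : ℝ)) with hL
  have key : ∀ n : ℕ, (n:ℝ)^(s+2) * theta n (2*s+3) x
      = ∑ j ∈ Finset.range (2*s+4), (A (2*s+3) j).eval x * ((n:ℝ)^(s+2) * ((n:ℝ)⁻¹)^j) := by
    intro n
    rw [theta_rep, Finset.mul_sum]
    exact Finset.sum_congr rfl (fun j _ => by ring)
  simp only [key]
  have hlim : ∀ j ∈ Finset.range (2*s+4),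
      Filter.Tendsto (fun n : ℕ => (A (2*s+3) j).eval x * ((n:ℝ)^(s+2) * ((n:ℝ)⁻¹)^j))
        Filter.atTop (nhds (if j = s+2 then L else 0)) := by
    intro j _
    rcases lt_trichotomy j (s+2) with h | h | h
    · rw [if_neg (by omega), A_vanish_low (2*s+3) j (by omega)]
      simpa using tendsto_const_nhds
    · subst h
      rw [if_pos rfl]
      have hc : (A (2*s+3) (s+2)).eval x = L := by
        rw [A_odd s]
        simp only [Polynomial.eval_mul, Polynomial.eval_C, Polynomial.eval_add,
          Polynomial.eval_one, Polynomial.eval_X, Polynomial.eval_pow,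
          Polynomial.eval_ofNat]
        rw [hL, inv_mul_eq_div]
      apply Filter.Tendsto.congr' _ (tendsto_const_nhds (x := L))
      filter_upwards [Filter.eventually_ge_atTop 1] with n hn
      have hn0 : (n:ℝ) ≠ 0 := Nat.cast_ne_zero.mpr (by omega)
      rw [← mul_pow, mul_inv_cancel₀ hn0, one_pow, mul_one, hc]
    · rw [if_neg (by omega)]
      obtain ⟨k, rfl⟩ : ∃ k, j = (s+2) + (k+1) := ⟨j - (s+3), by omega⟩
      have h0 : Filter.Tendsto (fun n : ℕ => ((n:ℝ)⁻¹)^(k+1)) Filter.atTop (nhds 0) := by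
        simpa using (tendsto_inv_atTop_nhds_zero_nat (𝕜 := ℝ)).pow (k+1)
      have h1 := h0.const_mul ((A (2*s+3) ((s+2)+(k+1))).eval x)
      rw [mul_zero] at h1
      apply Filter.Tendsto.congr' _ h1
      filter_upwards [Filter.eventually_ge_atTop 1] with n hn
      have hn0 : (n:ℝ) ≠ 0 := Nat.cast_ne_zero.mpr (by omega)
      have hone : (n:ℝ)^(s+2) * ((n:ℝ)⁻¹)^(s+2) = 1 := by
        rw [← mul_pow, mul_inv_cancel₀ hn0, one_pow]
      have hsplit : (n:ℝ)^(s+2) * ((n:ℝ)⁻¹)^((s+2)+(k+1)) = ((n:ℝ)⁻¹)^(k+1) := by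
        rw [pow_add ((n:ℝ)⁻¹) (s+2) (k+1), ← mul_assoc, hone, one_mul]
      rw [hsplit]
  have htot := tendsto_finset_sum (Finset.range (2*s+4)) hlim
  rwa [Finset.sum_ite_eq' (Finset.range (2*s+4)) (s+2) (fun _ => L),
    if_pos (Finset.mem_range.mpr (by omega))] at htot
end

section
/- For every integer r ≥ 1 and every real x ≥ 0, lim_{n→∞} n^r·θ_{2r}^{(n)}(x) = X^r / (2^r·r!), where X = x(1+x). -/
open Filter Topology Finset

noncomputable def XP : Polynomial (Polynomial ℝ) := Polynomial.X * (1 + Polynomial.X)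

noncomputable def bc : ℕ → Polynomial (Polynomial ℝ) × Polynomial (Polynomial ℝ)
  | 0 => (1, 0)
  | m + 1 =>
    let b := (bc m).1
    let c := (bc m).2
    let b' := Polynomial.C (Polynomial.C ((2 * (m : ℝ) + 2)⁻¹)) *
        (XP * (Polynomial.C Polynomial.X * Polynomial.derivative c + b))
    (b', Polynomial.C (Polynomial.C ((2 * (m : ℝ) + 3)⁻¹)) *
        (XP * (Polynomial.derivative b' + c)))

lemma eval_swap (p : Polynomial (Polynomial ℝ)) (u x : ℝ) :
    Polynomial.eval x (p.map (Polynomial.evalRingHom u)) =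
      Polynomial.eval u (p.eval (Polynomial.C x)) := by
  induction p using Polynomial.induction_on' with
  | add p q hp hq => simp [hp, hq]
  | monomial k a => simp [Polynomial.eval_monomial]

lemma theta_succ (n k : ℕ) (x : ℝ) : theta n (k + 2) x =
    x * (1 + x) * (deriv (theta n (k + 1)) x + theta n k x) / (n * (k + 2)) := rfl

lemma deriv_const_mul_eval (a x : ℝ) (q : Polynomial ℝ) :
    deriv (fun y => a * q.eval y) x = a * q.derivative.eval x := by
  rw [deriv_const_mul _ (q.differentiableAt)]
  simp [Polynomial.deriv]

lemma theta_eq_s3 (n : ℕ) (hn : (n : ℝ) ≠ 0) (m : ℕ) :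
    theta n (2 * m) =
      (fun x => ((n : ℝ))⁻¹ ^ m *
        Polynomial.eval x ((bc m).1.map (Polynomial.evalRingHom (n : ℝ)⁻¹))) ∧
    theta n (2 * m + 1) =
      (fun x => ((n : ℝ))⁻¹ ^ (m + 1) *
        Polynomial.eval x ((bc m).2.map (Polynomial.evalRingHom (n : ℝ)⁻¹))) := by
  induction m with
  | zero =>
      constructor
      · funext x; simp [theta, bc]
      · funext x; simp [theta, bc]
  | succ m ih =>
      obtain ⟨hb, hc⟩ := ih
      have h2m : (2 * (m : ℝ) + 2) ≠ 0 := by positivity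
      have h2m3 : (2 * (m : ℝ) + 3) ≠ 0 := by positivity
      have hbnew : theta n (2 * (m + 1)) =
          (fun x => ((n : ℝ))⁻¹ ^ (m + 1) *
            Polynomial.eval x ((bc (m + 1)).1.map (Polynomial.evalRingHom (n : ℝ)⁻¹))) := by
        funext x
        rw [show 2 * (m + 1) = 2 * m + 2 from by ring, theta_succ, hc, hb,
          deriv_const_mul_eval]
        simp only [bc, XP, Polynomial.map_mul, Polynomial.map_add, Polynomial.map_C,
          Polynomial.eval_mul, Polynomial.eval_add, Polynomial.eval_C, Polynomial.map_one,
          Polynomial.eval_one, Polynomial.map_X, Polynomial.eval_X, Polynomial.derivative_map,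
          Polynomial.coe_evalRingHom, Polynomial.eval_C]
        push_cast
        simp only [← Polynomial.derivative_map, Polynomial.map_mul, Polynomial.map_add, Polynomial.map_C, Polynomial.map_X, Polynomial.map_pow, Polynomial.coe_evalRingHom, Polynomial.eval_C, Polynomial.eval_X, div_eq_mul_inv, mul_inv]
        ring
      refine ⟨hbnew, ?_⟩
      funext x
      rw [show 2 * (m + 1) + 1 = (2 * m + 1) + 2 from by ring, theta_succ,
        show 2 * m + 1 + 1 = 2 * (m + 1) from by ring, hbnew, hc, deriv_const_mul_eval]
      simp only [bc, XP, Polynomial.map_mul, Polynomial.map_add, Polynomial.map_C,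
        Polynomial.eval_mul, Polynomial.eval_add, Polynomial.eval_C, Polynomial.map_one,
        Polynomial.eval_one, Polynomial.map_X, Polynomial.eval_X, Polynomial.derivative_map,
        Polynomial.coe_evalRingHom]
      push_cast
      simp only [← Polynomial.derivative_map, Polynomial.map_mul, Polynomial.map_add, Polynomial.map_C, Polynomial.map_X, Polynomial.map_pow, Polynomial.coe_evalRingHom, Polynomial.eval_C, Polynomial.eval_X, div_eq_mul_inv, mul_inv, Polynomial.map_one, mul_one]
      ring

lemma bc_zero_eval (m : ℕ) (x : ℝ) :
    Polynomial.eval x ((bc m).1.map (Polynomial.evalRingHom (0 : ℝ))) =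
      (x * (1 + x)) ^ m / (2 ^ m * (Nat.factorial m : ℝ)) := by
  induction m with
  | zero => simp [bc]
  | succ m ih =>
      have h2m : (2 * (m : ℝ) + 2) ≠ 0 := by positivity
      have hf : (Nat.factorial m : ℝ) ≠ 0 := Nat.cast_ne_zero.2 m.factorial_ne_zero
      simp only [bc, XP, Polynomial.map_mul, Polynomial.map_add, Polynomial.map_C,
        Polynomial.eval_mul, Polynomial.eval_add, Polynomial.eval_C, Polynomial.map_one,
        Polynomial.eval_one, Polynomial.map_X, Polynomial.eval_X, Polynomial.derivative_map,
        Polynomial.coe_evalRingHom, Polynomial.eval_zero] at ih ⊢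
      rw [ih]
      rw [Nat.factorial_succ]
      push_cast
      field_simp
      ring

/-- `lim_{n→∞} n^r θ_{2r}^{(n)}(x) = X^r / (2^r r!)`. -/
theorem theta_even_asymptotics (r : ℕ) (hr : 1 ≤ r) (x : ℝ) (hx : 0 ≤ x) :
    Filter.Tendsto (fun n : ℕ => (n : ℝ) ^ r * theta n (2 * r) x) Filter.atTop
      (nhds ((x * (1 + x)) ^ r / (2 ^ r * (Nat.factorial r : ℝ)))) := by
  set Q : Polynomial ℝ := (bc r).1.eval (Polynomial.C x) with hQ
  have hlim : Filter.Tendsto (fun n : ℕ => Polynomial.eval ((n : ℝ))⁻¹ Q) Filter.atTop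
      (nhds (Polynomial.eval 0 Q)) := by
    exact (Q.continuous_aeval.tendsto 0).comp tendsto_inv_atTop_nhds_zero_nat
  have h0 : Polynomial.eval (0 : ℝ) Q = (x * (1 + x)) ^ r / (2 ^ r * (Nat.factorial r : ℝ)) := by
    rw [← eval_swap, bc_zero_eval]
  rw [← h0]
  apply hlim.congr'
  filter_upwards [eventually_ge_atTop 1] with n hn
  have hn0 : (n : ℝ) ≠ 0 := by positivity
  rw [congrFun (theta_eq_s3 n hn0 r).1 x, eval_swap]
  field_simp
  rw [← mul_pow, mul_one_div_cancel hn0, one_pow, one_mul]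
end

section
/- For every integer r ≥ 2 and every real x ≥ 0, lim_{n→∞} n^r·η_{2r-1}^{(n)}(x) = (−1)^r·(1+2x)·X^{r-1} / (3·2^{r-2}·(r-2)!), where X = x(1+x). -/
open Filter Topology Finset

noncomputable def etaOddLim (x : ℝ) : ℕ → ℝ
  | 0 => 0
  | j + 1 => (-1) ^ j * (1 + 2 * x) * (x * (1 + x)) ^ (j + 1) /
      (3 * 2 ^ j * (Nat.factorial j : ℝ))

noncomputable def etaEvenLim (x : ℝ) (m : ℕ) : ℝ :=
  (-1) ^ (m + 1) * (x * (1 + x)) ^ (m + 1) / (2 ^ (m + 1) * (Nat.factorial (m + 1) : ℝ))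

lemma tendsto_nat_add_atTop (c : ℝ) :
    Tendsto (fun n : ℕ => (n : ℝ) + c) atTop atTop :=
  tendsto_atTop_add_const_right _ c tendsto_natCast_atTop_atTop

lemma tendsto_inv_nat_add (c : ℝ) :
    Tendsto (fun n : ℕ => 1 / ((n : ℝ) + c)) atTop (nhds 0) := by
  simpa [Pi.inv_def] using (tendsto_nat_add_atTop c).inv_tendsto_atTop

lemma tendsto_nat_div_nat_add (c : ℝ) (hc : 0 ≤ c) :
    Tendsto (fun n : ℕ => (n : ℝ) / ((n : ℝ) + c)) atTop (nhds 1) := by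
  have hbase : Tendsto (fun n : ℕ => 1 - c * (1 / ((n : ℝ) + c))) atTop (nhds (1 - c * 0)) :=
    tendsto_const_nhds.sub (tendsto_const_nhds.mul (tendsto_inv_nat_add c))
  rw [show (1 : ℝ) - c * 0 = 1 by ring] at hbase
  apply hbase.congr'
  filter_upwards [eventually_ge_atTop 1] with n hn
  have hn' : (0 : ℝ) < (n : ℝ) + c := by
    have : (1 : ℝ) ≤ (n : ℝ) := by exact_mod_cast hn
    linarith
  field_simp
  ring

lemma eta_key (x : ℝ) : ∀ m : ℕ,
    Tendsto (fun n : ℕ => (n : ℝ) ^ (m + 1) * eta n (2 * m + 2) x) atTop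
      (nhds (etaEvenLim x m)) ∧
    Tendsto (fun n : ℕ => (n : ℝ) ^ (m + 1) * eta n (2 * m + 1) x) atTop
      (nhds (etaOddLim x m)) := by
  intro m
  induction m with
  | zero =>
    constructor
    · have heq : ∀ n : ℕ, (n : ℝ) ^ (0 + 1) * eta n (2 * 0 + 2) x
          = (-(x * (1 + x)) / 2) * ((n : ℝ) / ((n : ℝ) + 1)) := by
        intro n
        show (n : ℝ) ^ 1 * eta n (0 + 2) x = _
        simp only [eta]
        have hn : ((n : ℝ) + 1) ≠ 0 := by positivity
        push_cast
        field_simp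
        ring
      have hbase : Tendsto (fun n : ℕ => (-(x * (1 + x)) / 2) * ((n : ℝ) / ((n : ℝ) + 1)))
          atTop (nhds ((-(x * (1 + x)) / 2) * 1)) :=
        tendsto_const_nhds.mul (tendsto_nat_div_nat_add 1 (by norm_num))
      have h2 : (-(x * (1 + x)) / 2) * 1 = etaEvenLim x 0 := by
        simp [etaEvenLim]
      rw [h2] at hbase
      exact hbase.congr (fun n => (heq n).symm)
    · have heq : ∀ n : ℕ, (n : ℝ) ^ (0 + 1) * eta n (2 * 0 + 1) x = 0 := by
        intro n
        show (n : ℝ) ^ 1 * eta n 1 x = 0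
        simp [eta]
      have : Tendsto (fun _ : ℕ => (0 : ℝ)) atTop (nhds (etaOddLim x 0)) := by
        simp only [etaOddLim]; exact tendsto_const_nhds
      exact this.congr (fun n => (heq n).symm)
  | succ m ih =>
    obtain ⟨hE, hO⟩ := ih
    have hnegpow : ∀ k : ℕ, (-(x * (1 + x))) ^ k = (-1) ^ k * (x * (1 + x)) ^ k := by
      intro k; rw [← neg_one_mul, mul_pow]
    -- odd step: η_{2m+3}
    have hOnew : Tendsto (fun n : ℕ => (n : ℝ) ^ (m + 2) * eta n (2 * m + 3) x) atTop
        (nhds (etaOddLim x (m + 1))) := by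
      have heq : ∀ n : ℕ, (n : ℝ) ^ (m + 2) * eta n (2 * m + 3) x
          = ((-((2 * (m:ℝ) + 2) * (1 + 2 * x) * ((n : ℝ) ^ (m + 1) * eta n (2 * m + 2) x))
              - x * (1 + x) * ((n : ℝ) ^ (m + 1) * eta n (2 * m + 1) x))
            * ((n : ℝ) / ((n : ℝ) + (2 * m + 2)))) / (2 * m + 3) := by
        intro n
        show (n : ℝ) ^ (m + 2) * eta n (2 * m + 1 + 2) x = _
        simp only [eta]
        have hn : ((n : ℝ) + (2 * m + 2)) ≠ 0 := by positivity
        push_cast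
        field_simp
        ring
      have hlim : Tendsto (fun n : ℕ =>
          ((-((2 * (m:ℝ) + 2) * (1 + 2 * x) * ((n : ℝ) ^ (m + 1) * eta n (2 * m + 2) x))
              - x * (1 + x) * ((n : ℝ) ^ (m + 1) * eta n (2 * m + 1) x))
            * ((n : ℝ) / ((n : ℝ) + (2 * m + 2)))) / (2 * m + 3)) atTop
          (nhds (((-((2 * (m:ℝ) + 2) * (1 + 2 * x) * etaEvenLim x m)
              - x * (1 + x) * etaOddLim x m) * 1) / (2 * m + 3))) :=
        ((((tendsto_const_nhds.mul hE).neg.sub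
          (tendsto_const_nhds.mul hO)).mul
          (tendsto_nat_div_nat_add (2 * m + 2) (by positivity))).div_const _)
      have hval : ((-((2 * (m:ℝ) + 2) * (1 + 2 * x) * etaEvenLim x m)
              - x * (1 + x) * etaOddLim x m) * 1) / (2 * m + 3) = etaOddLim x (m + 1) := by
        cases m with
        | zero =>
          simp only [etaOddLim, etaEvenLim]
          norm_num [Nat.factorial]
          ring
        | succ j =>
          simp only [etaOddLim, etaEvenLim]
          have hf0 : (Nat.factorial j : ℝ) ≠ 0 := by
            exact_mod_cast Nat.factorial_ne_zero j
          have hf2 : (Nat.factorial (j + 2) : ℝ) = (j + 2) * ((j + 1) * Nat.factorial j) := by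
            push_cast [Nat.factorial_succ]; ring
          have hf1 : (Nat.factorial (j + 1) : ℝ) = (j + 1) * Nat.factorial j := by
            push_cast [Nat.factorial_succ]; ring
          rw [hf1, hf2]
          have hj1 : ((j : ℝ) + 1) ≠ 0 := by positivity
          have hj2 : ((j : ℝ) + 2) ≠ 0 := by positivity
          push_cast
          field_simp
          ring
      rw [← hval]
      exact hlim.congr (fun n => (heq n).symm)
    -- even step: η_{2m+4}
    have hEnew : Tendsto (fun n : ℕ => (n : ℝ) ^ (m + 2) * eta n (2 * m + 4) x) atTop
        (nhds (etaEvenLim x (m + 1))) := by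
      have heq : ∀ n : ℕ, (n : ℝ) ^ (m + 2) * eta n (2 * m + 4) x
          = (-((2 * (m:ℝ) + 3) * (1 + 2 * x) * ((n : ℝ) ^ (m + 2) * eta n (2 * m + 3) x)
                * (1 / ((n : ℝ) + (2 * m + 3))))
              - x * (1 + x) * ((n : ℝ) ^ (m + 1) * eta n (2 * m + 2) x)
                * ((n : ℝ) / ((n : ℝ) + (2 * m + 3)))) / (2 * m + 4) := by
        intro n
        show (n : ℝ) ^ (m + 2) * eta n (2 * m + 2 + 2) x = _
        simp only [eta]
        have hn : ((n : ℝ) + (2 * m + 3)) ≠ 0 := by positivity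
        push_cast
        field_simp
        ring
      have hlim : Tendsto (fun n : ℕ =>
          (-((2 * (m:ℝ) + 3) * (1 + 2 * x) * ((n : ℝ) ^ (m + 2) * eta n (2 * m + 3) x)
                * (1 / ((n : ℝ) + (2 * m + 3))))
              - x * (1 + x) * ((n : ℝ) ^ (m + 1) * eta n (2 * m + 2) x)
                * ((n : ℝ) / ((n : ℝ) + (2 * m + 3)))) / (2 * m + 4)) atTop
          (nhds ((-((2 * (m:ℝ) + 3) * (1 + 2 * x) * etaOddLim x (m + 1) * 0)
              - x * (1 + x) * etaEvenLim x m * 1) / (2 * m + 4))) :=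
        ((((tendsto_const_nhds.mul hOnew).mul (tendsto_inv_nat_add (2 * m + 3))).neg.sub
          ((tendsto_const_nhds.mul hE).mul
            (tendsto_nat_div_nat_add (2 * m + 3) (by positivity)))).div_const _)
      have hval : (-((2 * (m:ℝ) + 3) * (1 + 2 * x) * etaOddLim x (m + 1) * 0)
              - x * (1 + x) * etaEvenLim x m * 1) / (2 * m + 4) = etaEvenLim x (m + 1) := by
        simp only [etaEvenLim]
        have hf0 : (Nat.factorial (m + 1) : ℝ) ≠ 0 := by
          exact_mod_cast Nat.factorial_ne_zero (m + 1)
        have hf2 : (Nat.factorial (m + 2) : ℝ) = (m + 2) * Nat.factorial (m + 1) := by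
          push_cast [Nat.factorial_succ]; ring
        rw [hf2]
        have hm2 : ((m : ℝ) + 2) ≠ 0 := by positivity
        field_simp
        ring
      rw [← hval]
      exact hlim.congr (fun n => (heq n).symm)
    refine ⟨?_, ?_⟩
    · rw [show 2 * (m + 1) + 2 = 2 * m + 4 by ring, show m + 1 + 1 = m + 2 by ring]
      exact hEnew
    · rw [show 2 * (m + 1) + 1 = 2 * m + 3 by ring, show m + 1 + 1 = m + 2 by ring]
      exact hOnew


/-- `lim_{n→∞} n^r η_{2r-1}^{(n)}(x) = (-1)^r (1+2x) X^{r-1} / (3·2^{r-2}(r-2)!)`. -/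
theorem eta_odd_asymptotics (r : ℕ) (hr : 2 ≤ r) (x : ℝ) (hx : 0 ≤ x) :
    Filter.Tendsto (fun n : ℕ => (n : ℝ) ^ r * eta n (2 * r - 1) x) Filter.atTop
      (nhds ((-1 : ℝ) ^ r * (1 + 2 * x) * (x * (1 + x)) ^ (r - 1) /
        (3 * 2 ^ (r - 2) * (Nat.factorial (r - 2) : ℝ)))) := by
  obtain ⟨j, rfl⟩ : ∃ j, r = j + 2 := ⟨r - 2, by omega⟩
  have h := (eta_key x (j + 1)).2
  rw [show 2 * (j + 1) + 1 = 2 * (j + 2) - 1 by omega,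
    show (j + 1) + 1 = j + 2 by omega] at h
  have hval : etaOddLim x (j + 1)
      = (-1 : ℝ) ^ (j + 2) * (1 + 2 * x) * (x * (1 + x)) ^ (j + 2 - 1) /
        (3 * 2 ^ (j + 2 - 2) * (Nat.factorial (j + 2 - 2) : ℝ)) := by
    simp only [etaOddLim, show j + 2 - 1 = j + 1 by omega, show j + 2 - 2 = j by omega]
    rw [show (-1 : ℝ) ^ (j + 2) = (-1) ^ j by ring]
  rw [← hval]
  exact h
end

section
/- Let n ≥ 1 and r ≥ 0 be integers and let ν_{r,n}(t) = ∏_{i=0}^{r-1} (t − i/n) be the Newton polynomial (with ν_{0,n} = 1). Then for every real x ≥ 0 the series Σ_{k=0}^∞ ν_{r,n}(k/n)·v_{k,n}(x) converges absolutely and equals ((n)_r / n^r)·x^r, where (n)_r = n(n+1)⋯(n+r-1) is the rising factorial. In particular, the Baskakov operator V_n maps a polynomial of degree r to a polynomial of degree r, and V_n reproduces the constant function 1 and the identity function x. -/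
set_option maxHeartbeats 1000000


open Filter Topology Finset

lemma negBinom (m : ℕ) : ∀ {y : ℝ}, 0 ≤ y → y < 1 →
    HasSum (fun j : ℕ => ((m + j).choose j : ℝ) * y ^ j) (((1 - y) ^ (m + 1))⁻¹) := by
  induction m with
  | zero =>
    intro y h0 h1
    simpa using hasSum_geometric_of_lt_one h0 h1
  | succ m ih =>
    intro y h0 h1
    rcases eq_or_lt_of_le h0 with h | hpos
    · -- y = 0
      rw [← h]
      have : HasSum (fun j : ℕ => ((m + 1 + j).choose j : ℝ) * (0:ℝ) ^ j)
          (((m + 1 + 0).choose 0 : ℝ) * (0:ℝ) ^ 0) := by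
        apply hasSum_single 0
        intro b hb
        simp [zero_pow hb]
      simpa using this
    · have hy1 : (0:ℝ) < 1 - y := by linarith
      -- summability
      have hbase : Summable (fun j : ℕ => ((j : ℝ)) ^ (m + 1) * y ^ j) := by
        have := summable_pow_mul_geometric_of_norm_lt_one (R := ℝ) (m + 1) (r := y)
          (by rw [Real.norm_eq_abs, abs_of_nonneg h0]; exact h1)
        exact this
      have hshift : Summable (fun j : ℕ => ((j + 1 : ℕ) : ℝ) ^ (m + 1) * y ^ (j + 1)) :=
        (summable_nat_add_iff 1).mpr hbase
      have hbound : Summable (fun j : ℕ =>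
          ((m + 2 : ℝ)) ^ (m + 1) * (y⁻¹ * (((j + 1 : ℕ) : ℝ) ^ (m + 1) * y ^ (j + 1)))) :=
        (hshift.mul_left _).mul_left _
      have hsum : Summable (fun j : ℕ => ((m + 1 + j).choose j : ℝ) * y ^ j) := by
        apply Summable.of_nonneg_of_le (fun j => by positivity) _ hbound
        intro j
        have hle : (m + 1 + j).choose j ≤ ((m + 2) * (j + 1)) ^ (m + 1) := by
          calc (m + 1 + j).choose j = (m + 1 + j).choose (m + 1) := by
                rw [← Nat.choose_symm (by omega)]
                congr 1
                omega
            _ ≤ (m + 1 + j) ^ (m + 1) := Nat.choose_le_pow _ _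
            _ ≤ ((m + 2) * (j + 1)) ^ (m + 1) := Nat.pow_le_pow_left (by nlinarith) _
        have hle' : ((m + 1 + j).choose j : ℝ) ≤ ((m + 2 : ℝ) * (j + 1)) ^ (m + 1) := by
          have h := (Nat.cast_le (α := ℝ)).mpr hle
          push_cast at h
          exact h
        have hyj : (0:ℝ) < y ^ j := pow_pos hpos j
        calc ((m + 1 + j).choose j : ℝ) * y ^ j
            ≤ ((m + 2 : ℝ) * (j + 1)) ^ (m + 1) * y ^ j := by
              exact mul_le_mul_of_nonneg_right hle' (le_of_lt hyj)
          _ = (m + 2 : ℝ) ^ (m + 1) * (y⁻¹ * (((j + 1 : ℕ) : ℝ) ^ (m + 1) * y ^ (j + 1))) := by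
              have hyne : y ≠ 0 := ne_of_gt hpos
              rw [mul_pow, pow_succ]
              push_cast
              field_simp
              ring
      set T := ∑' j : ℕ, ((m + 1 + j).choose j : ℝ) * y ^ j with hT
      have hTsum : HasSum (fun j : ℕ => ((m + 1 + j).choose j : ℝ) * y ^ j) T := hsum.hasSum
      have h1' : HasSum (fun j : ℕ => ((m + 1 + (j + 1)).choose (j + 1) : ℝ) * y ^ (j + 1))
          (T - 1) := by
        have := (hasSum_nat_add_iff' (f := fun j : ℕ => ((m + 1 + j).choose j : ℝ) * y ^ j) 1).2
          hTsum
        simpa using this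
      have h2 : HasSum (fun j : ℕ => ((m + (j + 1)).choose (j + 1) : ℝ) * y ^ (j + 1))
          ((((1 - y) ^ (m + 1))⁻¹) - 1) := by
        have := (hasSum_nat_add_iff' (f := fun j : ℕ => ((m + j).choose j : ℝ) * y ^ j) 1).2
          (ih h0 h1)
        simpa using this
      have h3 : HasSum (fun j : ℕ => y * (((m + 1 + j).choose j : ℝ) * y ^ j)) (y * T) :=
        hTsum.mul_left y
      have hadd := h2.add h3
      have hfe : (fun j : ℕ => ((m + (j + 1)).choose (j + 1) : ℝ) * y ^ (j + 1)
            + y * (((m + 1 + j).choose j : ℝ) * y ^ j))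
          = fun j : ℕ => ((m + 1 + (j + 1)).choose (j + 1) : ℝ) * y ^ (j + 1) := by
        funext j
        have : (m + 1 + (j + 1)).choose (j + 1) = (m + j + 1).choose j + (m + j + 1).choose (j + 1) := by
          rw [show m + 1 + (j + 1) = (m + j + 1) + 1 by ring, Nat.choose_succ_succ']
        rw [show m + (j + 1) = m + j + 1 by ring, show m + 1 + j = m + j + 1 by ring, this]
        push_cast
        ring
      rw [hfe] at hadd
      have hTval : T - 1 = ((1 - y) ^ (m + 1))⁻¹ - 1 + y * T := h1'.unique hadd
      have : T = ((1 - y) ^ (m + 1 + 1))⁻¹ := by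
        have hne : (1 - y) ≠ 0 := ne_of_gt hy1
        have h4 : T * (1 - y) = ((1 - y) ^ (m + 1))⁻¹ := by linear_combination hTval
        calc T = T * (1 - y) * (1 - y)⁻¹ := by field_simp
          _ = ((1 - y) ^ (m + 1))⁻¹ * (1 - y)⁻¹ := by rw [h4]
          _ = ((1 - y) ^ (m + 1 + 1))⁻¹ := by rw [← mul_inv, ← pow_succ]
      rw [← this]
      exact hTsum

lemma rising_mul_factorial (m r : ℕ) : risingFactorial (m + 1) r * (Nat.factorial m) = Nat.factorial (m + r) := by
  induction r with
  | zero => simp [risingFactorial]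
  | succ r ih =>
    rw [risingFactorial, prod_range_succ, ← risingFactorial]
    calc risingFactorial (m + 1) r * (m + 1 + r) * (Nat.factorial m)
        = (m + 1 + r) * (risingFactorial (m + 1) r * (Nat.factorial m)) := by ring
      _ = (m + 1 + r) * Nat.factorial (m + r) := by rw [ih]
      _ = Nat.factorial (m + (r + 1)) := by
          rw [show m + (r + 1) = (m + r) + 1 by ring, Nat.factorial_succ]
          ring

lemma key_identity (m j r : ℕ) :
    (j + r).descFactorial r * ((m + j + r).choose (j + r))
      = risingFactorial (m + 1) r * ((m + r + j).choose j) := by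
  apply Nat.eq_of_mul_eq_mul_right (show 0 < (Nat.factorial j) * (Nat.factorial m) by positivity)
  have h1 : (j + r).descFactorial r * (Nat.factorial j) = Nat.factorial (j + r) := by
    have := Nat.factorial_mul_descFactorial (n := j + r) (k := r) (by omega)
    rw [show j + r - r = j by omega] at this
    rw [mul_comm]; exact this
  have h2 : (m + j + r).choose (j + r) * (Nat.factorial (j + r) * (Nat.factorial m)) = Nat.factorial (m + j + r) := by
    have := Nat.choose_mul_factorial_mul_factorial (n := m + j + r) (k := j + r) (by omega)
    rw [show m + j + r - (j + r) = m by omega] at this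
    rw [← this]; ring
  have h3 : (m + r + j).choose j * ((Nat.factorial j) * Nat.factorial (m + r)) = Nat.factorial (m + r + j) := by
    have := Nat.choose_mul_factorial_mul_factorial (n := m + r + j) (k := j) (by omega)
    rw [show m + r + j - j = m + r by omega] at this
    rw [← this]; ring
  have h4 := rising_mul_factorial m r
  calc (j + r).descFactorial r * ((m + j + r).choose (j + r)) * ((Nat.factorial j) * (Nat.factorial m))
      = (m + j + r).choose (j + r) * (((j + r).descFactorial r * (Nat.factorial j)) * (Nat.factorial m)) := by ring
    _ = (m + j + r).choose (j + r) * (Nat.factorial (j + r) * (Nat.factorial m)) := by rw [h1]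
    _ = Nat.factorial (m + j + r) := h2
    _ = Nat.factorial (m + r + j) := by rw [show m + j + r = m + r + j by ring]
    _ = (m + r + j).choose j * ((Nat.factorial j) * Nat.factorial (m + r)) := h3.symm
    _ = (m + r + j).choose j * ((Nat.factorial j) * (risingFactorial (m + 1) r * (Nat.factorial m))) := by rw [h4]
    _ = risingFactorial (m + 1) r * ((m + r + j).choose j) * ((Nat.factorial j) * (Nat.factorial m)) := by ring

lemma basis_hasSum (p : ℕ) (hp : 1 ≤ p) {x : ℝ} (hx : 0 ≤ x) :
    HasSum (fun j : ℕ => baskakovBasis p j x) 1 := by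
  obtain ⟨m, rfl⟩ : ∃ m, p = m + 1 := ⟨p - 1, by omega⟩
  have h1x : (0:ℝ) < 1 + x := by linarith
  have h1x' : (1 + x : ℝ) ≠ 0 := ne_of_gt h1x
  set y : ℝ := x / (1 + x) with hy
  have hy0 : 0 ≤ y := div_nonneg hx h1x.le
  have hy1 : y < 1 := (div_lt_one h1x).2 (by linarith)
  have hyx : 1 - y = (1 + x)⁻¹ := by rw [hy]; field_simp; ring
  have h := (negBinom m hy0 hy1).mul_left (((1 + x) ^ (m + 1))⁻¹)
  have hval : ((1 + x) ^ (m + 1))⁻¹ * ((1 - y) ^ (m + 1))⁻¹ = 1 := by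
    rw [hyx, inv_pow, inv_inv]
    field_simp
  rw [hval] at h
  have hfun : (fun j : ℕ => baskakovBasis (m + 1) j x)
      = fun j => ((1 + x) ^ (m + 1))⁻¹ * (((m + j).choose j : ℝ) * y ^ j) := by
    funext j
    unfold baskakovBasis
    rw [show m + 1 + j - 1 = m + j by omega, hy, div_pow, pow_add]
    have : ((1 + x) : ℝ) ^ j ≠ 0 := by positivity
    field_simp
    try ring
  rw [hfun]
  exact h

lemma desc_hasSum (n : ℕ) (hn : 1 ≤ n) (r : ℕ) {x : ℝ} (hx : 0 ≤ x) :
    HasSum (fun k : ℕ => (k.descFactorial r : ℝ) * baskakovBasis n k x)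
      ((risingFactorial n r : ℝ) * x ^ r) := by
  obtain ⟨m, rfl⟩ : ∃ m, n = m + 1 := ⟨n - 1, by omega⟩
  have h1x : (0:ℝ) < 1 + x := by linarith
  have hb := (basis_hasSum (m + 1 + r) (by omega) hx).mul_left
    ((risingFactorial (m + 1) r : ℝ) * x ^ r)
  rw [mul_one] at hb
  rw [← hasSum_nat_add_iff' (f := fun k : ℕ => (k.descFactorial r : ℝ) * baskakovBasis (m + 1) k x) r]
  have hzero : ∑ i ∈ range r, (i.descFactorial r : ℝ) * baskakovBasis (m + 1) i x = 0 := by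
    apply Finset.sum_eq_zero
    intro i hi
    rw [Nat.descFactorial_eq_zero_iff_lt.2 (mem_range.1 hi)]
    simp
  rw [hzero, sub_zero]
  have hfun : (fun j : ℕ => ((j + r).descFactorial r : ℝ) * baskakovBasis (m + 1) (j + r) x)
      = fun j => (risingFactorial (m + 1) r : ℝ) * x ^ r * baskakovBasis (m + 1 + r) j x := by
    funext j
    unfold baskakovBasis
    rw [show m + 1 + (j + r) - 1 = m + j + r by omega,
        show m + 1 + r + j - 1 = m + r + j by omega,
        show m + 1 + (j + r) = m + 1 + r + j by ring]
    have hcast : ((j + r).descFactorial r : ℝ) * ((m + j + r).choose (j + r) : ℝ)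
        = (risingFactorial (m + 1) r : ℝ) * ((m + r + j).choose j : ℝ) := by
      exact_mod_cast congrArg (Nat.cast (R := ℝ)) (key_identity m j r)
    have hD : ((1 + x) : ℝ) ^ (m + 1 + r + j) ≠ 0 := by positivity
    field_simp
    linear_combination (x ^ (j + r)) * hcast
  exact hfun ▸ hb

lemma prod_cast_desc (k r : ℕ) :
    ∏ i ∈ Finset.range r, ((k : ℝ) - (i : ℝ)) = (k.descFactorial r : ℝ) := by
  induction r with
  | zero => simp
  | succ r ih =>
    rw [prod_range_succ, ih, Nat.descFactorial_succ]
    rcases lt_or_ge k (r + 1) with h | h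
    · rcases Nat.lt_succ_iff_lt_or_eq.mp h with h' | rfl
      · rw [Nat.descFactorial_eq_zero_iff_lt.2 h']; simp
      · simp
    · have hc : ((k - r : ℕ) : ℝ) = (k : ℝ) - r := by
        rw [Nat.cast_sub (by omega : r ≤ k)]
      rw [Nat.cast_mul, hc]; ring


/-- `V_n` maps the Newton polynomial `ν_{r,n}(t) = Π_{i<r}(t - i/n)` to
`((n)_r / n^r) x^r`, the series converging absolutely; in particular `V_n` reproduces
`1` and `x`. -/
theorem baskakov_newton_polynomials (n : ℕ) (hn : 1 ≤ n) (r : ℕ) (x : ℝ) (hx : 0 ≤ x) :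
    Summable (fun k : ℕ =>
      |(∏ i ∈ Finset.range r, ((k : ℝ) / n - (i : ℝ) / n)) * baskakovBasis n k x|) ∧
    ∑' k : ℕ, (∏ i ∈ Finset.range r, ((k : ℝ) / n - (i : ℝ) / n)) * baskakovBasis n k x
      = ((risingFactorial n r : ℝ) / (n : ℝ) ^ r) * x ^ r ∧
    ∑' k : ℕ, baskakovBasis n k x = 1 ∧
    ∑' k : ℕ, ((k : ℝ) / n) * baskakovBasis n k x = x := by
  have hnR : (0:ℝ) < n := by exact_mod_cast hn
  have h1x : (0:ℝ) < 1 + x := by linarith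
  have hprod : ∀ k : ℕ, ∏ i ∈ Finset.range r, ((k : ℝ) / n - (i : ℝ) / n)
      = (k.descFactorial r : ℝ) / (n : ℝ) ^ r := by
    intro k
    simp only [div_sub_div_same]
    rw [Finset.prod_div_distrib, Finset.prod_const, card_range, prod_cast_desc]
  have hbnn : ∀ k : ℕ, 0 ≤ baskakovBasis n k x := by
    intro k
    exact div_nonneg (mul_nonneg (Nat.cast_nonneg _) (pow_nonneg hx _))
      (pow_nonneg (by linarith) _)
  have hmain : HasSum
      (fun k : ℕ => (∏ i ∈ Finset.range r, ((k : ℝ) / n - (i : ℝ) / n)) * baskakovBasis n k x)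
      (((risingFactorial n r : ℝ) / (n : ℝ) ^ r) * x ^ r) := by
    have h := (desc_hasSum n hn r hx).mul_left (((n : ℝ) ^ r)⁻¹)
    have hfun : (fun k : ℕ =>
          (∏ i ∈ Finset.range r, ((k : ℝ) / n - (i : ℝ) / n)) * baskakovBasis n k x)
        = fun k : ℕ => ((n : ℝ) ^ r)⁻¹ * ((k.descFactorial r : ℝ) * baskakovBasis n k x) := by
      funext k
      rw [hprod k]
      ring
    have hval : ((n : ℝ) ^ r)⁻¹ * ((risingFactorial n r : ℝ) * x ^ r)
        = ((risingFactorial n r : ℝ) / (n : ℝ) ^ r) * x ^ r := by ring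
    rw [hfun, ← hval]
    exact h
  refine ⟨?_, hmain.tsum_eq, (basis_hasSum n hn hx).tsum_eq, ?_⟩
  · have hfa : (fun k : ℕ =>
        |(∏ i ∈ Finset.range r, ((k : ℝ) / n - (i : ℝ) / n)) * baskakovBasis n k x|)
        = fun k : ℕ =>
        (∏ i ∈ Finset.range r, ((k : ℝ) / n - (i : ℝ) / n)) * baskakovBasis n k x := by
      funext k
      refine abs_of_nonneg ?_
      rw [hprod k]
      exact mul_nonneg (div_nonneg (Nat.cast_nonneg _) (pow_nonneg hnR.le _)) (hbnn k)
    rw [hfa]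
    exact hmain.summable
  · have h := (desc_hasSum n hn 1 hx).mul_left ((n : ℝ)⁻¹)
    have hfun : (fun k : ℕ => ((k : ℝ) / n) * baskakovBasis n k x)
        = fun k : ℕ => (n : ℝ)⁻¹ * ((k.descFactorial 1 : ℝ) * baskakovBasis n k x) := by
      funext k
      rw [Nat.descFactorial_one]
      ring
    have hval : (n : ℝ)⁻¹ * ((risingFactorial n 1 : ℝ) * x ^ 1) = x := by
      have : risingFactorial n 1 = n := by simp [risingFactorial]
      rw [this, pow_one]
      field_simp
    rw [hfun, h.tsum_eq]
    exact hval
end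

section
/- Let n ≥ 1 and m ≥ 0 be integers. Then for every real x ≥ 0, the m-th central moment of the Baskakov operator satisfies Σ_{k=0}^∞ (k/n − x)^m·v_{k,n}(x) = m!·θ_m^{(n)}(x). -/
open Filter Topology Finset

/-- Newton coefficients. -/
noncomputable def dd (n : ℕ) : ℕ → ℕ → ℝ → ℝ
  | 0 => fun i _ => if i = 0 then 1 else 0
  | m + 1 => fun i x =>
      ((i : ℝ) / n) * (dd n m i x + dd n m (i - 1) x) - x * dd n m i x

lemma dd_zero_of_lt (n : ℕ) : ∀ m i, m < i → ∀ x : ℝ, dd n m i x = 0 := by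
  intro m
  induction m with
  | zero =>
      intro i hi x
      have : i ≠ 0 := by omega
      simp [dd, this]
  | succ m ih =>
      intro i hi x
      have h1 : dd n m i x = 0 := ih i (lt_of_le_of_lt (Nat.le_succ m) hi) x
      have h2 : dd n m (i - 1) x = 0 := ih (i - 1) (by omega) x
      simp [dd, h1, h2]

lemma dd_hasDerivAt (n : ℕ) : ∀ m i (x : ℝ),
    HasDerivAt (fun y => dd n m i y) (-(m : ℝ) * dd n (m - 1) i x) x := by
  intro m
  induction m with
  | zero =>
      intro i x
      simp only [Nat.cast_zero, neg_zero, zero_mul]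
      exact hasDerivAt_const x _
  | succ m ih =>
      intro i x
      have h1 := ih i x
      have h2 := ih (i - 1) x
      have hx : HasDerivAt (fun y : ℝ => y) 1 x := hasDerivAt_id x
      have H : HasDerivAt (fun y => dd n (m + 1) i y)
          (((i : ℝ) / n) * (-(m : ℝ) * dd n (m - 1) i x + -(m : ℝ) * dd n (m - 1) (i - 1) x)
            - (1 * dd n m i x + x * (-(m : ℝ) * dd n (m - 1) i x))) x := by
        have := ((h1.add h2).const_mul ((i : ℝ) / n)).sub (hx.mul h1)
        simpa [dd, Pi.sub_def, Pi.mul_def] using this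
      convert H using 1
      simp only [Nat.add_sub_cancel]
      cases m with
      | zero => cases i <;> simp [dd]
      | succ s =>
          have hA : dd n (s + 1) i x
              = ((i : ℝ) / n) * (dd n s i x + dd n s (i - 1) x) - x * dd n s i x := rfl
          simp only [Nat.add_sub_cancel, hA]
          push_cast
          ring

lemma cast_choose_mul (k i : ℕ) :
    (k : ℝ) * (k.choose i : ℝ)
      = (i : ℝ) * (k.choose i : ℝ) + ((i : ℝ) + 1) * (k.choose (i + 1) : ℝ) := by
  rcases le_or_gt i k with h | h
  · have h0 := Nat.choose_succ_right_eq k i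
    have h1 : ((k.choose (i + 1) * (i + 1) : ℕ) : ℝ) = ((k.choose i * (k - i) : ℕ) : ℝ) := by
      exact_mod_cast congrArg (Nat.cast (R := ℝ)) h0
    push_cast [Nat.cast_sub h] at h1
    linarith [h1]
  · rw [Nat.choose_eq_zero_of_lt h, Nat.choose_eq_zero_of_lt (by omega)]
    simp

lemma newton (n : ℕ) (x : ℝ) : ∀ m k : ℕ,
    ((k : ℝ) / n - x) ^ m = ∑ i ∈ range (m + 1), dd n m i x * (k.choose i : ℝ) := by
  intro m
  induction m with
  | zero => intro k; simp [dd]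
  | succ m ih =>
      intro k
      rw [pow_succ, ih k, Finset.sum_mul]
      have hterm : ∀ i, dd n m i x * (k.choose i : ℝ) * ((k : ℝ) / n - x)
          = ((i : ℝ) / n * dd n m i x - x * dd n m i x) * (k.choose i : ℝ)
            + ((i : ℝ) + 1) / n * dd n m i x * (k.choose (i + 1) : ℝ) := by
        intro i
        have h := cast_choose_mul k i
        linear_combination (dd n m i x / n) * h
      rw [Finset.sum_congr rfl fun i _ => hterm i, Finset.sum_add_distrib]
      have expand : ∀ i ∈ range (m + 2), dd n (m + 1) i x * (k.choose i : ℝ)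
          = ((i : ℝ) / n * dd n m i x - x * dd n m i x) * (k.choose i : ℝ)
            + (i : ℝ) / n * dd n m (i - 1) x * (k.choose i : ℝ) := by
        intro i _
        have hA : dd n (m + 1) i x
            = ((i : ℝ) / n) * (dd n m i x + dd n m (i - 1) x) - x * dd n m i x := rfl
        rw [hA]; ring
      rw [Finset.sum_congr rfl expand, Finset.sum_add_distrib]
      congr 1
      · conv_rhs => rw [Finset.sum_range_succ]
        rw [dd_zero_of_lt n m (m + 1) (Nat.lt_succ_self m) x]
        simp
      · conv_rhs => rw [Finset.sum_range_succ']
        simp only [Nat.cast_zero, zero_div, zero_mul, add_zero]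
        apply Finset.sum_congr rfl
        intro i _
        push_cast [Nat.add_sub_cancel]
        ring

/-- The explicit polynomial `F_m(x) = Σ_i C(n+i-1,i) x^i d_{m,i}(x)`. -/
noncomputable def FF (n m : ℕ) (x : ℝ) : ℝ :=
  ∑ i ∈ range (m + 1), ((n + i - 1).choose i : ℝ) * x ^ i * dd n m i x

lemma FF_hasDerivAt (n m : ℕ) (x : ℝ) :
    HasDerivAt (fun y => FF n m y)
      (∑ i ∈ range (m + 1), ((n + i - 1).choose i : ℝ) *
        ((i : ℝ) * x ^ (i - 1) * dd n m i x + x ^ i * (-(m : ℝ) * dd n (m - 1) i x))) x := by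
  apply HasDerivAt.fun_sum
  intro i _
  have h1 : HasDerivAt (fun y : ℝ => y ^ i) ((i : ℝ) * x ^ (i - 1)) x := hasDerivAt_pow i x
  have h2 := dd_hasDerivAt n m i x
  have := (h1.fun_mul h2).const_mul ((n + i - 1).choose i : ℝ)
  have key : (fun y : ℝ => ((n + i - 1).choose i : ℝ) * y ^ i * dd n m i y)
      = fun y => ((n + i - 1).choose i : ℝ) * (y ^ i * dd n m i y) := by
    funext y
    ring
  rw [key]
  exact this

lemma choose_id (n i : ℕ) (hn : 1 ≤ n) :
    (i + 1) * (n + i).choose (i + 1) = (n + i) * (n + i - 1).choose i := by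
  obtain ⟨s, rfl⟩ := Nat.exists_eq_add_of_le hn
  have e1 : 1 + s + i - 1 = s + i := by omega
  have e2 : 1 + s + i = (s + i) + 1 := by omega
  rw [e1, e2, mul_comm]
  simpa [Nat.succ_eq_add_one] using (Nat.add_one_mul_choose_eq (s + i) i).symm

/-- Core identity: `x(1+x) Σ_i c_i i x^{i-1} d_{m+1,i} = n F_{m+2}`. -/
lemma core (n m : ℕ) (hn : 1 ≤ n) (x : ℝ) :
    x * (1 + x) * ∑ i ∈ range (m + 2),
        ((n + i - 1).choose i : ℝ) * ((i : ℝ) * x ^ (i - 1)) * dd n (m + 1) i x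
      = n * FF n (m + 2) x := by
  have hn0 : (n : ℝ) ≠ 0 := Nat.cast_ne_zero.mpr (by omega)
  -- rewrite LHS: x * (i * x^(i-1)) = i * x^i (both sides zero at i = 0)
  have hL : x * (1 + x) * ∑ i ∈ range (m + 2),
        ((n + i - 1).choose i : ℝ) * ((i : ℝ) * x ^ (i - 1)) * dd n (m + 1) i x
      = ∑ i ∈ range (m + 2), ((n + i - 1).choose i : ℝ) * ((i : ℝ) * x ^ i)
          * dd n (m + 1) i x
        + ∑ i ∈ range (m + 2), ((n + i - 1).choose i : ℝ) * ((i : ℝ) * x ^ (i + 1))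
          * dd n (m + 1) i x := by
    rw [Finset.mul_sum, ← Finset.sum_add_distrib]
    apply Finset.sum_congr rfl
    intro i _
    cases i with
    | zero => simp
    | succ j =>
        have : x * ((j + 1 : ℕ) * x ^ (j + 1 - 1)) = (j + 1 : ℕ) * x ^ (j + 1) := by
          push_cast [Nat.add_sub_cancel]
          ring
        push_cast [Nat.add_sub_cancel]
        ring
  rw [hL]
  -- rewrite RHS
  have hR : (n : ℝ) * FF n (m + 2) x
      = ∑ i ∈ range (m + 3), ((n + i - 1).choose i : ℝ) * x ^ i *
          ((i : ℝ) * (dd n (m + 1) i x + dd n (m + 1) (i - 1) x) - n * x * dd n (m + 1) i x) := by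
    rw [FF, Finset.mul_sum]
    apply Finset.sum_congr rfl
    intro i _
    have hA : dd n (m + 2) i x
        = ((i : ℝ) / n) * (dd n (m + 1) i x + dd n (m + 1) (i - 1) x)
          - x * dd n (m + 1) i x := rfl
    rw [hA]
    have hni : (n : ℝ) * ((i : ℝ) / n) = i := by field_simp
    linear_combination (((n + i - 1).choose i : ℝ) * x ^ i *
      (dd n (m + 1) i x + dd n (m + 1) (i - 1) x)) * hni
  rw [hR]
  -- split RHS into three sums
  have split : ∀ i ∈ range (m + 3), ((n + i - 1).choose i : ℝ) * x ^ i *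
        ((i : ℝ) * (dd n (m + 1) i x + dd n (m + 1) (i - 1) x) - n * x * dd n (m + 1) i x)
      = (((n + i - 1).choose i : ℝ) * ((i : ℝ) * x ^ i) * dd n (m + 1) i x
          - ((n + i - 1).choose i : ℝ) * ((n : ℝ) * x ^ (i + 1)) * dd n (m + 1) i x)
        + ((n + i - 1).choose i : ℝ) * ((i : ℝ) * x ^ i) * dd n (m + 1) (i - 1) x := by
    intro i _
    ring
  rw [Finset.sum_congr rfl split, Finset.sum_add_distrib, Finset.sum_sub_distrib]
  have hz : ∀ j, m + 1 < j → dd n (m + 1) j x = 0 := fun j hj => dd_zero_of_lt n (m + 1) j hj x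
  -- first sum : drop the last (i = m+2) term
  have e1 : ∑ i ∈ range (m + 3), ((n + i - 1).choose i : ℝ) * ((i : ℝ) * x ^ i) * dd n (m + 1) i x
      = ∑ i ∈ range (m + 2), ((n + i - 1).choose i : ℝ) * ((i : ℝ) * x ^ i) * dd n (m + 1) i x := by
    rw [Finset.sum_range_succ, hz (m + 2) (by omega)]
    simp
  have e2 : ∑ i ∈ range (m + 3), ((n + i - 1).choose i : ℝ) * ((n : ℝ) * x ^ (i + 1)) * dd n (m + 1) i x
      = ∑ i ∈ range (m + 2), ((n + i - 1).choose i : ℝ) * ((n : ℝ) * x ^ (i + 1)) * dd n (m + 1) i x := by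
    rw [Finset.sum_range_succ, hz (m + 2) (by omega)]
    simp
  have e3 : ∑ i ∈ range (m + 3), ((n + i - 1).choose i : ℝ) * ((i : ℝ) * x ^ i) * dd n (m + 1) (i - 1) x
      = ∑ i ∈ range (m + 2), ((n + (i + 1) - 1).choose (i + 1) : ℝ) * (((i : ℝ) + 1) * x ^ (i + 1)) * dd n (m + 1) i x := by
    rw [Finset.sum_range_succ']
    simp only [Nat.cast_zero, zero_mul, mul_zero, add_zero, pow_zero, mul_one]
    apply Finset.sum_congr rfl
    intro i _
    push_cast [Nat.add_sub_cancel]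
    ring
  rw [e1, e2, e3]
  -- now reduce to termwise identity
  have : ∀ i ∈ range (m + 2),
      ((n + i - 1).choose i : ℝ) * ((i : ℝ) * x ^ (i + 1)) * dd n (m + 1) i x
        = ((n + (i + 1) - 1).choose (i + 1) : ℝ) * (((i : ℝ) + 1) * x ^ (i + 1)) * dd n (m + 1) i x
          - ((n + i - 1).choose i : ℝ) * ((n : ℝ) * x ^ (i + 1)) * dd n (m + 1) i x := by
    intro i _
    have hc := choose_id n i hn
    have hc' : ((i : ℝ) + 1) * ((n + i).choose (i + 1) : ℝ)
        = ((n : ℝ) + i) * ((n + i - 1).choose i : ℝ) := by exact_mod_cast congrArg (Nat.cast (R := ℝ)) hc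
    have e : n + (i + 1) - 1 = n + i := by omega
    rw [e]
    linear_combination (-(x ^ (i + 1) * dd n (m + 1) i x)) * hc'
  rw [Finset.sum_congr rfl this, Finset.sum_sub_distrib]
  ring

lemma FF_one (n : ℕ) (hn : 1 ≤ n) (x : ℝ) : FF n 1 x = 0 := by
  have hn0 : (n : ℝ) ≠ 0 := Nat.cast_ne_zero.mpr (by omega)
  have h0 : dd n 1 0 x = -x := by
    show ((0 : ℕ) : ℝ) / n * (dd n 0 0 x + dd n 0 (0 - 1) x) - x * dd n 0 0 x = -x
    simp [dd]
  have h1 : dd n 1 1 x = 1 / n := by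
    show ((1 : ℕ) : ℝ) / n * (dd n 0 1 x + dd n 0 0 x) - x * dd n 0 1 x = 1 / n
    simp [dd]
  have hc : ((n + 1 - 1).choose 1 : ℝ) = n := by
    have : n + 1 - 1 = n := by omega
    simp [this]
  rw [FF]
  rw [show (1 : ℕ) + 1 = 2 from rfl]
  rw [Finset.sum_range_succ, Finset.sum_range_one, h0, h1, hc]
  have : n + 0 - 1 = n - 1 := by omega
  rw [this]
  simp [Nat.choose_zero_right]
  field_simp
  ring

lemma theta_eq_s13 (n : ℕ) (hn : 1 ≤ n) : ∀ m (x : ℝ),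
    (m.factorial : ℝ) * theta n m x = FF n m x := by
  have hn0 : (n : ℝ) ≠ 0 := Nat.cast_ne_zero.mpr (by omega)
  intro m
  induction m using Nat.twoStepInduction with
  | zero =>
      intro x
      simp [theta, FF, dd]
  | one =>
      intro x
      rw [FF_one n hn x, show theta n 1 = fun _ => (0 : ℝ) from rfl]
      ring
  | more m ihm ihm1 =>
      intro x
      have hcore := core n m hn x
      set A := ∑ i ∈ range (m + 2),
          ((n + i - 1).choose i : ℝ) * ((i : ℝ) * x ^ (i - 1)) * dd n (m + 1) i x with hAdef
      have hfun : theta n (m + 1) = fun y => FF n (m + 1) y / ((m + 1).factorial : ℝ) := by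
        funext y
        have hy := ihm1 y
        have hf : ((m + 1).factorial : ℝ) ≠ 0 := Nat.cast_ne_zero.mpr (Nat.factorial_ne_zero _)
        field_simp
        linarith [hy]
      have hB : (∑ i ∈ range (m + 2), ((n + i - 1).choose i : ℝ) * x ^ i * dd n m i x)
          = FF n m x := by
        rw [FF, Finset.sum_range_succ, dd_zero_of_lt n m (m + 1) (Nat.lt_succ_self m) x]
        simp
      have hd := FF_hasDerivAt n (m + 1) x
      simp only [Nat.add_sub_cancel, Nat.cast_add, Nat.cast_one] at hd
      have hDval : (∑ i ∈ range (m + 2), ((n + i - 1).choose i : ℝ) *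
            ((i : ℝ) * x ^ (i - 1) * dd n (m + 1) i x
              + x ^ i * (-((m : ℝ) + 1) * dd n m i x)))
          = A - ((m : ℝ) + 1) * FF n m x := by
        rw [← hB, hAdef, Finset.mul_sum, ← Finset.sum_sub_distrib]
        apply Finset.sum_congr rfl
        intro i _
        ring
      rw [hDval] at hd
      have hderiv : deriv (theta n (m + 1)) x
          = (A - ((m : ℝ) + 1) * FF n m x) / ((m + 1).factorial : ℝ) := by
        rw [hfun]
        exact (hd.div_const _).deriv
      have htm : theta n m x = FF n m x / (m.factorial : ℝ) := by
        have hm0 : (m.factorial : ℝ) ≠ 0 := Nat.cast_ne_zero.mpr (Nat.factorial_ne_zero m)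
        field_simp
        linarith [ihm x]
      have hFF2 : FF n (m + 2) x = x * (1 + x) * A / n := by
        field_simp
        linarith [hcore]
      show ((m + 2).factorial : ℝ) *
          (x * (1 + x) * (deriv (theta n (m + 1)) x + theta n m x) / (n * (m + 2)))
        = FF n (m + 2) x
      rw [hderiv, htm, hFF2]
      have hf1 : ((m + 1).factorial : ℝ) = ((m : ℝ) + 1) * (m.factorial : ℝ) := by
        push_cast [Nat.factorial_succ]
        ring
      have hf2 : ((m + 2).factorial : ℝ) = ((m : ℝ) + 2) * (((m : ℝ) + 1) * (m.factorial : ℝ)) := by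
        rw [Nat.factorial_succ, Nat.factorial_succ]
        push_cast
        ring
      have hm0 : (m.factorial : ℝ) ≠ 0 := Nat.cast_ne_zero.mpr (Nat.factorial_ne_zero m)
      have hm1 : ((m : ℝ) + 1) ≠ 0 := by positivity
      have hm2 : ((m : ℝ) + 2) ≠ 0 := by positivity
      rw [hf1, hf2]
      field_simp
      ring

lemma choose_tri (s i l : ℕ) :
    (l + i).choose i * (s + (l + i)).choose (l + i)
      = (s + i).choose i * (l + (s + i)).choose (s + i) := by
  have h1 : (l + i).choose i * i.factorial * l.factorial = (l + i).factorial := by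
    simpa [Nat.add_sub_cancel] using
      Nat.choose_mul_factorial_mul_factorial (show i ≤ l + i by omega)
  have h2 : (s + (l + i)).choose (l + i) * (l + i).factorial * s.factorial
      = (s + (l + i)).factorial := by
    simpa [show s + (l + i) - (l + i) = s by omega] using
      Nat.choose_mul_factorial_mul_factorial (show l + i ≤ s + (l + i) by omega)
  have h3 : (s + i).choose i * i.factorial * s.factorial = (s + i).factorial := by
    simpa [Nat.add_sub_cancel] using
      Nat.choose_mul_factorial_mul_factorial (show i ≤ s + i by omega)
  have h4 : (l + (s + i)).choose (s + i) * (s + i).factorial * l.factorial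
      = (l + (s + i)).factorial := by
    simpa [Nat.add_sub_cancel] using
      Nat.choose_mul_factorial_mul_factorial (show s + i ≤ l + (s + i) by omega)
  have e : s + (l + i) = l + (s + i) := by omega
  apply Nat.eq_of_mul_eq_mul_right
    (show 0 < i.factorial * l.factorial * s.factorial by positivity)
  calc (l + i).choose i * (s + (l + i)).choose (l + i)
        * (i.factorial * l.factorial * s.factorial)
      = (s + (l + i)).choose (l + i) * ((l + i).choose i * i.factorial * l.factorial)
        * s.factorial := by ring
    _ = (s + (l + i)).choose (l + i) * (l + i).factorial * s.factorial := by rw [h1]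
    _ = (s + (l + i)).factorial := h2
    _ = (l + (s + i)).factorial := by rw [e]
    _ = (l + (s + i)).choose (s + i) * (s + i).factorial * l.factorial := h4.symm
    _ = (l + (s + i)).choose (s + i) * ((s + i).choose i * i.factorial * s.factorial)
        * l.factorial := by rw [h3]
    _ = (s + i).choose i * (l + (s + i)).choose (s + i)
        * (i.factorial * l.factorial * s.factorial) := by ring

lemma hasSum_choose_basis (n : ℕ) (hn : 1 ≤ n) (i : ℕ) {x : ℝ} (hx : 0 ≤ x) :
    HasSum (fun k => (k.choose i : ℝ) * baskakovBasis n k x)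
      (((n + i - 1).choose i : ℝ) * x ^ i) := by
  obtain ⟨s, rfl⟩ := Nat.exists_eq_add_of_le hn
  set r := x / (1 + x) with hr
  have h1x : (0 : ℝ) < 1 + x := by linarith
  have h1x' : (1 + x) ≠ 0 := ne_of_gt h1x
  have hrlt : ‖r‖ < 1 := by
    rw [Real.norm_eq_abs, abs_of_nonneg (by positivity), div_lt_one h1x]
    linarith
  have base := hasSum_choose_mul_geometric_of_norm_lt_one (𝕜 := ℝ) (s + i) hrlt
  have hvalue : 1 / (1 - r) ^ (s + i + 1) = (1 + x) ^ (s + i + 1) := by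
    have h1r : 1 - r = 1 / (1 + x) := by
      rw [hr]; field_simp; ring
    rw [h1r, div_pow, one_pow, one_div_one_div]
  set a : ℝ := (((1 + s) + i - 1).choose i : ℝ) * x ^ i / (1 + x) ^ ((1 + s) + i) with ha
  have key : ∀ l : ℕ, ((l + i).choose i : ℝ) * baskakovBasis (1 + s) (l + i) x
      = a * (((l + (s + i)).choose (s + i) : ℝ) * r ^ l) := by
    intro l
    have hnat : (l + i).choose i * ((1 + s) + (l + i) - 1).choose (l + i)
        = ((1 + s) + i - 1).choose i * (l + (s + i)).choose (s + i) := by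
      rw [show (1 + s) + (l + i) - 1 = s + (l + i) by omega,
        show (1 + s) + i - 1 = s + i by omega]
      exact choose_tri s i l
    rw [baskakovBasis]
    calc ((l + i).choose i : ℝ)
          * ((((1 + s) + (l + i) - 1).choose (l + i) : ℝ) * x ^ (l + i)
            / (1 + x) ^ ((1 + s) + (l + i)))
        = (((l + i).choose i : ℝ) * (((1 + s) + (l + i) - 1).choose (l + i) : ℝ))
            * x ^ (l + i) / (1 + x) ^ ((1 + s) + (l + i)) := by ring
      _ = ((((1 + s) + i - 1).choose i : ℝ) * ((l + (s + i)).choose (s + i) : ℝ))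
            * x ^ (l + i) / (1 + x) ^ ((1 + s) + (l + i)) := by
          rw [← Nat.cast_mul, hnat, Nat.cast_mul]
      _ = a * (((l + (s + i)).choose (s + i) : ℝ) * r ^ l) := by
          rw [ha, hr, show (1 + s) + (l + i) = ((1 + s) + i) + l by omega,
            pow_add x l i, pow_add (1 + x) ((1 + s) + i) l, div_pow]
          field_simp
  have main : HasSum (fun l => ((l + i).choose i : ℝ) * baskakovBasis (1 + s) (l + i) x)
      ((((1 + s) + i - 1).choose i : ℝ) * x ^ i) := by
    have base2 := base.mul_left a
    rw [hvalue] at base2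
    have hval2 : a * (1 + x) ^ (s + i + 1) = (((1 + s) + i - 1).choose i : ℝ) * x ^ i := by
      rw [ha, show (1 + s) + i = s + i + 1 by omega]
      field_simp
    rw [hval2] at base2
    have hfeq : (fun l => a * (((l + (s + i)).choose (s + i) : ℝ) * r ^ l))
        = fun l => ((l + i).choose i : ℝ) * baskakovBasis (1 + s) (l + i) x :=
      funext fun l => (key l).symm
    rwa [hfeq] at base2
  apply (hasSum_nat_add_iff' (f := fun k => (k.choose i : ℝ) * baskakovBasis (1 + s) k x) i).mp
  have hzero : ∑ j ∈ range i, (j.choose i : ℝ) * baskakovBasis (1 + s) j x = 0 := by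
    apply Finset.sum_eq_zero
    intro j hj
    rw [Finset.mem_range] at hj
    rw [Nat.choose_eq_zero_of_lt hj]
    simp
  rw [hzero, sub_zero]
  exact main


/-- the m-th central moment of the Baskakov operator equals `m! θ_m^{(n)}(x)`. -/
theorem baskakov_central_moments (n : ℕ) (hn : 1 ≤ n) (m : ℕ) (x : ℝ) (hx : 0 ≤ x) :
    ∑' k : ℕ, ((k : ℝ) / n - x) ^ m * baskakovBasis n k x
      = (Nat.factorial m : ℝ) * theta n m x := by
  rw [theta_eq_s13 n hn m x]
  have hexp : ∀ k : ℕ, ((k : ℝ) / n - x) ^ m * baskakovBasis n k x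
      = ∑ i ∈ range (m + 1), dd n m i x * ((k.choose i : ℝ) * baskakovBasis n k x) := by
    intro k
    rw [newton n x m k, Finset.sum_mul]
    apply Finset.sum_congr rfl
    intro i _
    ring
  rw [tsum_congr hexp,
    Summable.tsum_finsetSum (fun i _ => ((hasSum_choose_basis n hn i hx).summable.mul_left (dd n m i x)))]
  rw [FF]
  apply Finset.sum_congr rfl
  intro i _
  rw [((hasSum_choose_basis n hn i hx).mul_left (dd n m i x)).tsum_eq]
  ring
end

section
/- For every integer s ≥ 1 and every real x ≥ 0 there exists a constant C > 0 such that for all integers n ≥ 1, the even central moments of the Baskakov operator satisfy Σ_{k=0}^∞ (k/n − x)^{2s}·v_{k,n}(x) ≤ C·n^{-s}; equivalently, Σ_{k=0}^∞ (k − nx)^{2s}·v_{k,n}(x) ≤ C·n^{s}. -/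
open Filter Topology Finset

lemma hasSum_baskakov_exp {n : ℕ} (hn : 1 ≤ n) {x : ℝ} (hx : 0 ≤ x) {t : ℝ}
    (ht : x * Real.exp t < 1 + x) :
    HasSum (fun k : ℕ => baskakovBasis n k x * Real.exp (t * k))
      (1 / (1 + x - x * Real.exp t) ^ n) := by
  have h1x : (0:ℝ) < 1 + x := by linarith
  set r : ℝ := x * Real.exp t / (1 + x) with hr_def
  have hr0 : 0 ≤ r := by positivity
  have hr1 : r < 1 := by
    rw [hr_def, div_lt_one h1x]; exact ht
  have hr : ‖r‖ < 1 := by rw [Real.norm_eq_abs, abs_of_nonneg hr0]; exact hr1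
  have h := (hasSum_choose_mul_geometric_of_norm_lt_one (n - 1) hr).mul_right
      ((1 / (1 + x) ^ n))
  have he : ∀ k : ℕ, ((k + (n-1)).choose (n-1) : ℝ) * r ^ k * (1 / (1 + x) ^ n)
      = baskakovBasis n k x * Real.exp (t * k) := by
    intro k
    have hch : (k + (n-1)).choose (n-1) = (n + k - 1).choose k := by
      have h1 : k + (n - 1) = n + k - 1 := by omega
      rw [h1]
      have h2 : k ≤ n + k - 1 := by omega
      rw [← Nat.choose_symm h2]
      congr 1; omega
    have hrk : r ^ k = x ^ k * (Real.exp t) ^ k / (1 + x) ^ k := by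
      rw [hr_def, div_pow, mul_pow]
    rw [hch, hrk, baskakovBasis]
    have het : Real.exp (t * k) = (Real.exp t) ^ k := by
      rw [mul_comm, Real.exp_nat_mul]
    rw [het, pow_add]
    field_simp
  rw [funext he] at h
  convert h using 1
  case e'_3 => exact rfl
  have : (1 + x - x * Real.exp t) = (1 - r) * (1 + x) := by
    rw [hr_def]; field_simp
  rw [this, mul_pow, Nat.sub_add_cancel hn, div_mul_div_comm, one_mul]

lemma key_scalar {x : ℝ} (hx : 0 ≤ x) {τ : ℝ} (hτ : |τ| ≤ 1 / (8 * (1 + x))) :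
    1 / 2 ≤ 1 + x - x * Real.exp τ ∧
    Real.exp (-(τ * x)) ≤ Real.exp (8 * (1 + x) ^ 2 * τ ^ 2) * (1 + x - x * Real.exp τ) := by
  have h1x : (0:ℝ) < 1 + x := by linarith
  have hτ1 : |τ| ≤ 1 := by
    calc |τ| ≤ 1 / (8 * (1 + x)) := hτ
    _ ≤ 1 := by rw [div_le_one (by positivity)]; nlinarith
  -- |exp τ - 1| ≤ 2 |τ|
  have hb1 : |Real.exp τ - 1| ≤ 2 * |τ| := by
    have := Real.exp_bound hτ1 (n := 1) one_pos
    simp only [Finset.range_one, Finset.sum_singleton, pow_zero, Nat.factorial_zero] at this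
    norm_num at this
    calc |Real.exp τ - 1| ≤ |τ| * 2 := this
    _ = 2 * |τ| := by ring
  -- |exp τ - 1 - τ| ≤ (3/4) τ^2
  have hb2 : |Real.exp τ - 1 - τ| ≤ (3/4) * τ ^ 2 := by
    have := Real.exp_bound hτ1 (n := 2) two_pos
    have hsum : ∑ m ∈ Finset.range 2, τ ^ m / (m.factorial : ℝ) = 1 + τ := by
      simp [Finset.sum_range_succ]
    rw [hsum] at this
    calc |Real.exp τ - 1 - τ| = |Real.exp τ - (1 + τ)| := by ring_nf
    _ ≤ |τ| ^ 2 * ((2:ℕ).succ / ((2:ℕ).factorial * 2)) := this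
    _ = (3/4) * τ ^ 2 := by rw [sq_abs]; norm_num; ring
  set u : ℝ := x * (Real.exp τ - 1) with hu_def
  have hxτ : x * |τ| ≤ 1 / 8 := by
    have : x ≤ 1 + x := by linarith
    calc x * |τ| ≤ (1 + x) * (1 / (8 * (1 + x))) := by
          apply mul_le_mul this hτ (abs_nonneg _) (by linarith)
    _ = 1 / 8 := by field_simp
  have hu_abs : |u| ≤ 1 / 4 := by
    rw [hu_def, abs_mul, abs_of_nonneg hx]
    calc x * |Real.exp τ - 1| ≤ x * (2 * |τ|) :=
          mul_le_mul_of_nonneg_left hb1 hx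
    _ = 2 * (x * |τ|) := by ring
    _ ≤ 2 * (1/8) := by linarith
    _ = 1/4 := by norm_num
  have hu_le : u ≤ 1/4 := le_trans (le_abs_self u) hu_abs
  have hu_ge : -(1/4) ≤ u := neg_le_of_abs_le hu_abs
  have hd_eq : 1 + x - x * Real.exp τ = 1 - u := by rw [hu_def]; ring
  constructor
  · rw [hd_eq]; linarith
  -- main inequality
  have hstep1 : (1 - u) * (1 + u + 2 * u ^ 2) ≥ 1 := by nlinarith [sq_nonneg u]
  have hpos2 : (0:ℝ) < 1 + u + 2 * u ^ 2 := by nlinarith [sq_nonneg u]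
  have hstep2 : Real.exp (-(u + 2 * u ^ 2)) ≤ 1 / (1 + u + 2 * u ^ 2) := by
    rw [Real.exp_neg, one_div]
    apply inv_anti₀ hpos2
    exact le_trans (by linarith) (Real.add_one_le_exp _)
  have hu2 : u ^ 2 ≤ 4 * x ^ 2 * τ ^ 2 := by
    have h1 : |u| ≤ x * (2 * |τ|) := by
      rw [hu_def, abs_mul, abs_of_nonneg hx]
      exact mul_le_mul_of_nonneg_left hb1 hx
    have h2 : u ^ 2 ≤ (x * (2 * |τ|)) ^ 2 := by
      rw [← sq_abs u]
      exact pow_le_pow_left₀ (abs_nonneg _) h1 2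
    calc u ^ 2 ≤ (x * (2 * |τ|)) ^ 2 := h2
    _ = 4 * x ^ 2 * τ ^ 2 := by rw [mul_pow, mul_pow, sq_abs]; ring
  have humτ : u - τ * x ≤ (3/4) * x * τ ^ 2 := by
    have : u - τ * x = x * (Real.exp τ - 1 - τ) := by rw [hu_def]; ring
    rw [this]
    calc x * (Real.exp τ - 1 - τ) ≤ x * |Real.exp τ - 1 - τ| :=
          mul_le_mul_of_nonneg_left (le_abs_self _) hx
    _ ≤ x * ((3/4) * τ ^ 2) := mul_le_mul_of_nonneg_left hb2 hx
    _ = (3/4) * x * τ ^ 2 := by ring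
  have hstep3 : -(τ * x) - 8 * (1 + x) ^ 2 * τ ^ 2 ≤ -(u + 2 * u ^ 2) := by
    nlinarith [sq_nonneg τ, sq_nonneg x]
  have hfinal : Real.exp (-(τ * x) - 8 * (1 + x) ^ 2 * τ ^ 2) ≤ 1 - u := by
    calc Real.exp (-(τ * x) - 8 * (1 + x) ^ 2 * τ ^ 2)
        ≤ Real.exp (-(u + 2 * u ^ 2)) := Real.exp_le_exp.mpr hstep3
    _ ≤ 1 / (1 + u + 2 * u ^ 2) := hstep2
    _ ≤ 1 - u := by rw [div_le_iff₀ hpos2]; linarith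
  rw [hd_eq]
  calc Real.exp (-(τ * x))
      = Real.exp (8 * (1 + x) ^ 2 * τ ^ 2) *
        Real.exp (-(τ * x) - 8 * (1 + x) ^ 2 * τ ^ 2) := by
        rw [← Real.exp_add]; ring_nf
  _ ≤ Real.exp (8 * (1 + x) ^ 2 * τ ^ 2) * (1 - u) :=
        mul_le_mul_of_nonneg_left hfinal (Real.exp_pos _).le

lemma pow_le_exp_pair (s : ℕ) {t : ℝ} (ht : 0 < t) (y : ℝ) :
    y ^ (2 * s) ≤ ((2 * s).factorial : ℝ) / t ^ (2 * s) *
      (Real.exp (t * y) + Real.exp (-(t * y))) := by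
  have habs : y ^ (2 * s) = |y| ^ (2 * s) := by
    rw [← abs_pow, abs_of_nonneg]
    rw [pow_mul]; positivity
  have hz : 0 ≤ t * |y| := by positivity
  have h1 : (t * |y|) ^ (2 * s) / ((2 * s).factorial : ℝ) ≤ Real.exp (t * |y|) := by
    calc (t * |y|) ^ (2 * s) / ((2 * s).factorial : ℝ)
        ≤ ∑ i ∈ Finset.range (2 * s + 1), (t * |y|) ^ i / (i.factorial : ℝ) := by
          exact Finset.single_le_sum (f := fun i => (t * |y|) ^ i / (i.factorial : ℝ))
            (fun i _ => by positivity) (Finset.self_mem_range_succ (2 * s))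
    _ ≤ Real.exp (t * |y|) := Real.sum_le_exp_of_nonneg hz _
  have h2 : Real.exp (t * |y|) ≤ Real.exp (t * y) + Real.exp (-(t * y)) := by
    rcases abs_cases y with ⟨h, _⟩ | ⟨h, _⟩
    · rw [h]; nlinarith [Real.exp_pos (-(t * y))]
    · rw [h]
      have : t * -y = -(t * y) := by ring
      rw [this]
      nlinarith [Real.exp_pos (t * y)]
  have htp : (0:ℝ) < t ^ (2 * s) := by positivity
  rw [habs, div_mul_eq_mul_div, le_div_iff₀ htp]
  calc |y| ^ (2 * s) * t ^ (2 * s) = (t * |y|) ^ (2 * s) := by rw [mul_pow]; ring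
  _ ≤ ((2 * s).factorial : ℝ) * Real.exp (t * |y|) := by
      rw [div_le_iff₀ (by positivity : (0:ℝ) < ((2 * s).factorial : ℝ))] at h1
      linarith [h1]
  _ ≤ ((2 * s).factorial : ℝ) * (Real.exp (t * y) + Real.exp (-(t * y))) := by
      apply mul_le_mul_of_nonneg_left h2 (by positivity)


/-- the even central moments of the Baskakov operator are `O(n^{-s})`. -/
theorem baskakov_even_central_moments_bound (s : ℕ) (hs : 1 ≤ s) (x : ℝ) (hx : 0 ≤ x) :
    ∃ C : ℝ, 0 < C ∧ ∀ n : ℕ, 1 ≤ n →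
      (∑' k : ℕ, ((k : ℝ) / n - x) ^ (2 * s) * baskakovBasis n k x ≤ C / (n : ℝ) ^ s) ∧
      (∑' k : ℕ, ((k : ℝ) - n * x) ^ (2 * s) * baskakovBasis n k x ≤ C * (n : ℝ) ^ s) := by
  have h1x : (0:ℝ) < 1 + x := by linarith
  set t0 : ℝ := 1 / (8 * (1 + x)) with ht0_def
  have ht0 : 0 < t0 := by positivity
  refine ⟨6 * ((2 * s).factorial : ℝ) * (8 * (1 + x)) ^ (2 * s), by positivity, ?_⟩
  set C : ℝ := 6 * ((2 * s).factorial : ℝ) * (8 * (1 + x)) ^ (2 * s) with hC_def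
  intro n hn
  have hn0 : (0:ℝ) < n := by exact_mod_cast Nat.pos_of_ne_zero (by omega)
  have hn1 : (1:ℝ) ≤ n := by exact_mod_cast hn
  have hsq1 : 1 ≤ Real.sqrt n := by
    rw [show (1:ℝ) = Real.sqrt 1 by simp]
    exact Real.sqrt_le_sqrt hn1
  have hsqpos : 0 < Real.sqrt n := lt_of_lt_of_le one_pos hsq1
  set t : ℝ := t0 / Real.sqrt n with ht_def
  have ht : 0 < t := by positivity
  have htle : t ≤ t0 := by
    rw [ht_def, div_le_iff₀ hsqpos]
    nlinarith
  have habs : |t| ≤ 1 / (8 * (1 + x)) := by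
    rw [abs_of_pos ht]; exact htle
  have habs' : |(-t)| ≤ 1 / (8 * (1 + x)) := by rwa [abs_neg]
  obtain ⟨hd1, he1⟩ := key_scalar hx habs
  obtain ⟨hd2, he2⟩ := key_scalar hx habs'
  have hden1 : x * Real.exp t < 1 + x := by linarith
  have hden2 : x * Real.exp (-t) < 1 + x := by linarith
  have hd1pos : (0:ℝ) < 1 + x - x * Real.exp t := by linarith
  have hd2pos : (0:ℝ) < 1 + x - x * Real.exp (-t) := by linarith
  have S1 := hasSum_baskakov_exp hn hx hden1
  have S2 := hasSum_baskakov_exp hn hx hden2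
  set F : ℝ := ((2 * s).factorial : ℝ) / t ^ (2 * s) with hF_def
  have hFpos : 0 < F := by positivity
  set a : ℝ := F * Real.exp (-(t * (n * x)))
  set b : ℝ := F * Real.exp (t * (n * x))
  have hapos : 0 < a := by positivity
  have hbpos : 0 < b := by positivity
  set g : ℕ → ℝ := fun k =>
    a * (baskakovBasis n k x * Real.exp (t * k)) +
    b * (baskakovBasis n k x * Real.exp (-t * k)) with hg_def
  have hg : HasSum g
      (a * (1 / (1 + x - x * Real.exp t) ^ n) + b * (1 / (1 + x - x * Real.exp (-t)) ^ n)) :=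
    (S1.mul_left a).add (S2.mul_left b)
  set f : ℕ → ℝ := fun k => ((k : ℝ) - n * x) ^ (2 * s) * baskakovBasis n k x with hf_def
  have hbnn : ∀ k, 0 ≤ baskakovBasis n k x := by
    intro k
    unfold baskakovBasis
    positivity
  have hfnn : ∀ k, 0 ≤ f k := by
    intro k
    apply mul_nonneg _ (hbnn k)
    rw [pow_mul]; positivity
  have hfg : ∀ k, f k ≤ g k := by
    intro k
    have hkey := pow_le_exp_pair s ht ((k : ℝ) - n * x)
    have h2 : f k ≤ F * (Real.exp (t * ((k:ℝ) - n * x)) +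
        Real.exp (-(t * ((k:ℝ) - n * x)))) * baskakovBasis n k x := by
      rw [hf_def]
      exact mul_le_mul_of_nonneg_right hkey (hbnn k)
    refine h2.trans_eq ?_
    rw [hg_def]
    simp only []
    rw [show t * ((k:ℝ) - n * x) = t * k + -(t * (n * x)) by ring, Real.exp_add,
      show -(t * (k:ℝ) + -(t * (n * x))) = -t * k + t * (n * x) by ring]
    rw [Real.exp_add]
    simp only [a, b]; ring
  have hgs : Summable g := hg.summable
  have hfs : Summable f := Summable.of_nonneg_of_le hfnn hfg hgs
  -- bound the two tilted sums
  have hnt2 : (n : ℝ) * t ^ 2 = t0 ^ 2 := by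
    rw [ht_def, div_pow, Real.sq_sqrt hn0.le]
    field_simp
  have hexp3 : Real.exp (8 * (1 + x) ^ 2 * t ^ 2) ^ n ≤ 3 := by
    rw [← Real.exp_nat_mul]
    have : (n : ℝ) * (8 * (1 + x) ^ 2 * t ^ 2) = 8 * (1 + x) ^ 2 * t0 ^ 2 := by
      rw [← hnt2]; ring
    rw [this, ht0_def]
    have h18 : 8 * (1 + x) ^ 2 * (1 / (8 * (1 + x))) ^ 2 = 1 / 8 := by
      field_simp
    rw [h18]
    calc Real.exp (1/8) ≤ Real.exp 1 := Real.exp_le_exp.mpr (by norm_num)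
    _ ≤ 3 := by linarith [Real.exp_one_lt_d9]
  have hG1 : Real.exp (-(t * (n * x))) * (1 / (1 + x - x * Real.exp t) ^ n) ≤ 3 := by
    have heq : Real.exp (-(t * (n * x))) * (1 / (1 + x - x * Real.exp t) ^ n)
        = (Real.exp (-(t * x)) / (1 + x - x * Real.exp t)) ^ n := by
      rw [div_pow, ← Real.exp_nat_mul]
      rw [show (n:ℝ) * -(t * x) = -(t * (n * x)) by ring]
      ring
    rw [heq]
    calc (Real.exp (-(t * x)) / (1 + x - x * Real.exp t)) ^ n
        ≤ (Real.exp (8 * (1 + x) ^ 2 * t ^ 2)) ^ n := by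
          apply pow_le_pow_left₀ (by positivity)
          rw [div_le_iff₀ hd1pos]
          exact he1
    _ ≤ 3 := hexp3
  have hG2 : Real.exp (t * (n * x)) * (1 / (1 + x - x * Real.exp (-t)) ^ n) ≤ 3 := by
    have heq : Real.exp (t * (n * x)) * (1 / (1 + x - x * Real.exp (-t)) ^ n)
        = (Real.exp (-(-t * x)) / (1 + x - x * Real.exp (-t))) ^ n := by
      rw [div_pow, ← Real.exp_nat_mul]
      rw [show (n:ℝ) * -(-t * x) = t * (n * x) by ring]
      ring
    rw [heq]
    calc (Real.exp (-(-t * x)) / (1 + x - x * Real.exp (-t))) ^ n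
        ≤ (Real.exp (8 * (1 + x) ^ 2 * t ^ 2)) ^ n := by
          apply pow_le_pow_left₀ (by positivity)
          rw [div_le_iff₀ hd2pos]
          have := he2
          rwa [show (-t) ^ 2 = t ^ 2 by ring] at this
    _ ≤ 3 := hexp3
  -- F in terms of n
  have hFval : F = ((2 * s).factorial : ℝ) * (8 * (1 + x)) ^ (2 * s) * (n : ℝ) ^ s := by
    rw [hF_def, ht_def, ht0_def]
    rw [div_pow, div_pow]
    have hsqn : Real.sqrt n ^ (2 * s) = (n : ℝ) ^ s := by
      rw [pow_mul, Real.sq_sqrt hn0.le]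
    rw [hsqn]
    field_simp
    ring
  have hmain : ∑' k, f k ≤ C * (n : ℝ) ^ s := by
    have h1 : ∑' k, f k ≤ ∑' k, g k := Summable.tsum_le_tsum hfg hfs hgs
    rw [hg.tsum_eq] at h1
    have h2 : a * (1 / (1 + x - x * Real.exp t) ^ n) ≤ F * 3 := by
      have : a * (1 / (1 + x - x * Real.exp t) ^ n)
          = F * (Real.exp (-(t * (n * x))) * (1 / (1 + x - x * Real.exp t) ^ n)) := by ring
      rw [this]
      exact mul_le_mul_of_nonneg_left hG1 hFpos.le
    have h3 : b * (1 / (1 + x - x * Real.exp (-t)) ^ n) ≤ F * 3 := by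
      have : b * (1 / (1 + x - x * Real.exp (-t)) ^ n)
          = F * (Real.exp (t * (n * x)) * (1 / (1 + x - x * Real.exp (-t)) ^ n)) := by ring
      rw [this]
      exact mul_le_mul_of_nonneg_left hG2 hFpos.le
    calc ∑' k, f k ≤ F * 3 + F * 3 := by linarith
    _ = 6 * F := by ring
    _ = C * (n : ℝ) ^ s := by rw [hFval, hC_def]; ring
  constructor
  · -- first inequality
    have hrw : ∀ k : ℕ, ((k : ℝ) / n - x) ^ (2 * s) * baskakovBasis n k x
        = f k / (n : ℝ) ^ (2 * s) := by
      intro k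
      rw [hf_def]
      have : (k : ℝ) / n - x = ((k : ℝ) - n * x) / n := by field_simp
      rw [this, div_pow]
      ring
    rw [tsum_congr hrw, tsum_div_const]
    have hpow : (n : ℝ) ^ (2 * s) = (n : ℝ) ^ s * (n : ℝ) ^ s := by
      rw [two_mul, pow_add]
    rw [div_le_div_iff₀ (by positivity) (by positivity)]
    calc (∑' k, f k) * (n:ℝ) ^ s ≤ (C * (n:ℝ) ^ s) * (n:ℝ) ^ s := by
          apply mul_le_mul_of_nonneg_right hmain (by positivity)
    _ = C * (n : ℝ) ^ (2 * s) := by rw [hpow]; ring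
  · exact hmain
end

section
/- Let p, j, n, k be integers with 0 ≤ j ≤ p, n > p and k ≥ 0. Then for every real x ≥ 0, x^j·(1+x)^{p-j}·v_{k,n}(x) = ω_{p,j}(n,k)·v_{k+j,n-p}(x), where ω_{p,j}(n,k) = [ (n+k-1)(n+k-2)⋯(n+k-p+j) · (k+1)(k+2)⋯(k+j) ] / [ (n-1)(n-2)⋯(n-p) ]. -/
open Filter Topology Finset
open Nat (factorial)
open scoped Nat

open Nat in
lemma desc_prod (m : ℕ) : ∀ r : ℕ, r ≤ m →
    ∏ i ∈ Finset.range r, ((m : ℝ) - i) = (m !) / (m - r)! := by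
  intro r
  induction r with
  | zero =>
    intro _
    rw [Nat.sub_zero, Finset.prod_range_zero, div_self]
    exact_mod_cast (Nat.factorial_pos m).ne'
  | succ r ih =>
    intro h
    rw [Finset.prod_range_succ, ih (by omega)]
    have h1 : (m - r)! = (m - r) * (m - (r+1))! := by
      have : m - r = (m - (r+1)) + 1 := by omega
      rw [this, Nat.factorial_succ]
    have h2 : ((m : ℝ) - r) = ((m - r : ℕ) : ℝ) := by
      push_cast [Nat.cast_sub (by omega : r ≤ m)]; ring
    rw [h2, h1]
    have := Nat.factorial_pos (m - (r+1))
    have hr : (0:ℝ) < ((m - r : ℕ) : ℝ) := by exact_mod_cast (show 0 < m - r by omega)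
    push_cast
    field_simp

open Nat in
lemma asc_prod (k : ℕ) : ∀ j : ℕ,
    ∏ i ∈ Finset.range j, ((k : ℝ) + 1 + i) = (k + j)! / (k !) := by
  intro j
  induction j with
  | zero =>
    rw [Nat.add_zero, Finset.prod_range_zero, div_self]
    exact_mod_cast (Nat.factorial_pos k).ne'
  | succ j ih =>
    rw [Finset.prod_range_succ, ih]
    have : (k + (j+1))! = (k + j + 1) * (k + j)! := by
      rw [show k + (j+1) = (k+j)+1 by ring, Nat.factorial_succ]
    rw [this]
    have := Nat.factorial_pos k
    push_cast
    field_simp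
    ring


/-- `x^j (1+x)^{p-j} v_{k,n}(x) = ω_{p,j}(n,k) v_{k+j,n-p}(x)`. -/
theorem baskakov_basis_multiplication (p j n k : ℕ) (hj : j ≤ p) (hn : p < n)
    (x : ℝ) (hx : 0 ≤ x) :
    x ^ j * (1 + x) ^ (p - j) * baskakovBasis n k x
      = ((∏ i ∈ Finset.range (p - j), ((n : ℝ) + k - 1 - i)) *
          (∏ i ∈ Finset.range j, ((k : ℝ) + 1 + i)) /
          ∏ i ∈ Finset.range p, ((n : ℝ) - 1 - i)) *
        baskakovBasis (n - p) (k + j) x := by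
  have hn1 : 1 ≤ n := by omega
  have P1 : ∏ i ∈ Finset.range (p - j), ((n : ℝ) + k - 1 - i)
      = ((n + k - 1)! : ℝ) / ((n + k - 1 - (p - j))! : ℝ) := by
    have h : ∀ i ∈ Finset.range (p - j), ((n : ℝ) + k - 1 - i) = ((n + k - 1 : ℕ) : ℝ) - i := by
      intro i _
      push_cast [Nat.cast_sub (show 1 ≤ n + k by omega)]
      ring
    rw [Finset.prod_congr rfl h, desc_prod _ _ (by omega)]
  have P2 := asc_prod k j
  have P3 : ∏ i ∈ Finset.range p, ((n : ℝ) - 1 - i)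
      = ((n - 1)! : ℝ) / ((n - 1 - p)! : ℝ) := by
    have h : ∀ i ∈ Finset.range p, ((n : ℝ) - 1 - i) = ((n - 1 : ℕ) : ℝ) - i := by
      intro i _
      push_cast [Nat.cast_sub hn1]
      ring
    rw [Finset.prod_congr rfl h, desc_prod _ _ (by omega)]
  have e1 : n + k - 1 - (p - j) = n - p + (k + j) - 1 := by omega
  have e2 : n - p + (k + j) - 1 - (k + j) = n - 1 - p := by omega
  have e3 : n + k - 1 - k = n - 1 := by omega
  have C1 : ((Nat.choose (n + k - 1) k : ℕ) : ℝ)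
      = ((n + k - 1)! : ℝ) / (((k)! : ℝ) * ((n - 1)! : ℝ)) := by
    rw [Nat.cast_choose ℝ (show k ≤ n + k - 1 by omega), e3]
  have C2 : ((Nat.choose (n - p + (k + j) - 1) (k + j) : ℕ) : ℝ)
      = ((n - p + (k + j) - 1)! : ℝ) / (((k + j)! : ℝ) * ((n - 1 - p)! : ℝ)) := by
    rw [Nat.cast_choose ℝ (show k + j ≤ n - p + (k + j) - 1 by omega), e2]
  have hpow : (1 + x) ^ (n + k) = (1 + x) ^ (p - j) * (1 + x) ^ (n - p + (k + j)) := by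
    rw [← pow_add]
    congr 1
    omega
  have h1x : (0 : ℝ) < 1 + x := by linarith
  have f1 : (((k)! : ℕ) : ℝ) ≠ 0 := by exact_mod_cast (Nat.factorial_pos k).ne'
  have f2 : (((n - 1)! : ℕ) : ℝ) ≠ 0 := by exact_mod_cast (Nat.factorial_pos (n - 1)).ne'
  have f3 : (((k + j)! : ℕ) : ℝ) ≠ 0 := by exact_mod_cast (Nat.factorial_pos (k + j)).ne'
  have f4 : (((n - 1 - p)! : ℕ) : ℝ) ≠ 0 := by
    exact_mod_cast (Nat.factorial_pos (n - 1 - p)).ne'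
  have f5 : (((n - p + (k + j) - 1)! : ℕ) : ℝ) ≠ 0 := by
    exact_mod_cast (Nat.factorial_pos (n - p + (k + j) - 1)).ne'
  unfold baskakovBasis
  rw [P1, P2, P3, e1, C1, C2, hpow]
  field_simp
  ring
end

section
/- Let n ≥ 1, p ≥ 0 and k ≥ 0 be integers. Then for every real x > 0, the p-th derivative of the Baskakov basis function satisfies D^p v_{k,n}(x) = (−1)^p·(n)_p·(Δ^p v_{·,n+p})_{k-p}(x), i.e. D^p v_{k,n}(x) = (−1)^p·(n)_p·Σ_{i=0}^{p} (−1)^{p-i}·binom(p,i)·v_{k-p+i,n+p}(x), with the convention v_{j,m} = 0 whenever j < 0, and where (n)_p = n(n+1)⋯(n+p-1) is the rising factorial. -/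
open Filter Topology Finset

/-- Baskakov basis functions indexed by an integer, vanishing for negative index. -/
noncomputable def baskakovBasisZ (n : ℕ) (j : ℤ) (x : ℝ) : ℝ :=
  if 0 ≤ j then baskakovBasis n j.toNat x else 0

lemma hasDerivAt_aux (c : ℝ) (k E : ℕ) (x : ℝ) (h1x : (0:ℝ) < 1 + x) :
    HasDerivAt (fun y : ℝ => c * y ^ k / (1+y) ^ E)
      ((c * ((k:ℝ) * x ^ (k-1)) * (1+x)^E - c * x ^ k * ((E:ℝ) * (1+x)^(E-1))) / ((1+x)^E)^2) x := by
  have h := (((hasDerivAt_pow k x).const_mul c).div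
    (((hasDerivAt_id x).const_add 1).pow E) (pow_ne_zero _ h1x.ne'))
  simp only [id] at h
  have e : (fun y : ℝ => c * y ^ k / (1+y) ^ E) = (fun y => c * y ^ k) / (fun x => 1 + x) ^ E := by
    funext y; simp
  rw [e]
  exact h.congr_deriv (by simp)

lemma hasDerivAt_bb_zero (s : ℕ) (x : ℝ) (hx : 0 < x) :
    HasDerivAt (baskakovBasis (s+1) 0)
      (((s:ℝ)+1) * (0 - baskakovBasis (s+2) 0 x)) x := by
  have h1x : (0:ℝ) < 1 + x := by linarith
  have hd := hasDerivAt_aux ((Nat.choose (s+1+0-1) 0 : ℝ)) 0 (s+1+0) x h1x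
  convert hd using 1
  · rfl
  simp only [baskakovBasis]
  have h2 : (1+x) ≠ 0 := h1x.ne'
  push_cast
  field_simp
  simp only [Nat.choose_zero_right, Nat.cast_one]
  ring

lemma hasDerivAt_bb_succ (s t : ℕ) (x : ℝ) (hx : 0 < x) :
    HasDerivAt (baskakovBasis (s+1) (t+1))
      (((s:ℝ)+1) * (baskakovBasis (s+2) t x - baskakovBasis (s+2) (t+1) x)) x := by
  have h1x : (0:ℝ) < 1 + x := by linarith
  have hd := hasDerivAt_aux ((Nat.choose (s+1+(t+1)-1) (t+1) : ℝ)) (t+1) (s+1+(t+1)) x h1x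
  convert hd using 1
  · rfl
  have hc1 : (t+1) * Nat.choose (s+t+1) (t+1) = (s+1) * Nat.choose (s+t+1) t := by
    have h := Nat.choose_succ_right_eq (s+t+1) t
    rw [show s+t+1-t = s+1 from by omega] at h
    linarith
  have hc2 : (s+t+2) * Nat.choose (s+t+1) (t+1) = (s+1) * Nat.choose (s+t+2) (t+1) := by
    have h := Nat.add_one_mul_choose_eq (s+t+1) s
    rw [show Nat.choose (s+t+1) s = Nat.choose (s+t+1) (t+1) from by
          rw [← Nat.choose_symm (show t+1 ≤ s+t+1 from by omega)]; congr 1; omega,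
        show Nat.choose (s+t+1+1) (s+1) = Nat.choose (s+t+2) (t+1) from by
          rw [← Nat.choose_symm (show t+1 ≤ s+t+2 from by omega)]; congr 1; omega] at h
    linarith
  have hc1' : ((t:ℝ)+1) * Nat.choose (s+t+1) (t+1) = ((s:ℝ)+1) * Nat.choose (s+t+1) t := by
    exact_mod_cast congrArg (Nat.cast : ℕ → ℝ) hc1
  have hc2' : ((s:ℝ)+t+2) * Nat.choose (s+t+1) (t+1) = ((s:ℝ)+1) * Nat.choose (s+t+2) (t+1) := by
    exact_mod_cast congrArg (Nat.cast : ℕ → ℝ) hc2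
  simp only [baskakovBasis]
  have h2 : (1+x) ≠ 0 := h1x.ne'
  rw [show s+1+(t+1)-1 = s+t+1 from by omega, show s+2+t-1 = s+t+1 from by omega,
      show s+2+(t+1)-1 = s+t+2 from by omega, show s+1+(t+1) = s+t+2 from by omega,
      show s+2+t = s+t+2 from by omega, show s+2+(t+1) = s+t+3 from by omega,
      show t+1-1 = t from by omega]
  push_cast
  rw [show s+t+3 = (s+t+1)+1+1 from rfl, show s+t+2 = (s+t+1)+1 from rfl,
      pow_succ ((1:ℝ)+x) ((s+t+1)+1), pow_succ ((1:ℝ)+x) (s+t+1)]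
  push_cast
  set C : ℝ := (Nat.choose (s+t+1) (t+1) : ℝ) with hC
  set C1 : ℝ := (Nat.choose (s+t+1) t : ℝ) with hC1
  set C2 : ℝ := (Nat.choose (s+t+2) (t+1) : ℝ) with hC2
  set A : ℝ := (1+x)^(s+t+1) with hA
  have hA0 : A ≠ 0 := pow_ne_zero _ h2
  clear_value C C1 C2 A
  have hs1 : ((s:ℝ)+1) ≠ 0 := by positivity
  have hC1v : C1 = ((t:ℝ)+1)*C/((s:ℝ)+1) := by field_simp; linarith [hc1']
  have hC2v : C2 = ((s:ℝ)+(t:ℝ)+2)*C/((s:ℝ)+1) := by field_simp; linarith [hc2']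
  rw [hC1v, hC2v]
  field_simp

lemma alternating_pascal (a : ℕ → ℝ) (p : ℕ) :
    ∑ i ∈ range (p+1), (-1:ℝ)^i * (Nat.choose p i) * (a i - a (i+1))
      = ∑ i ∈ range (p+2), (-1:ℝ)^i * (Nat.choose (p+1) i) * a i := by
  have hL : ∑ i ∈ range (p+1), (-1:ℝ)^i * (Nat.choose p i) * (a i - a (i+1))
      = ∑ i ∈ range (p+1), (-1:ℝ)^i * (Nat.choose p i) * a i
        - ∑ i ∈ range (p+1), (-1:ℝ)^i * (Nat.choose p i) * a (i+1) := by
    rw [← Finset.sum_sub_distrib]; apply Finset.sum_congr rfl; intros; ring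
  rw [hL, Finset.sum_range_succ' (fun i => (-1:ℝ)^i * (Nat.choose (p+1) i) * a i) (p+1),
      Finset.sum_range_succ' (fun i => (-1:ℝ)^i * (Nat.choose p i) * a i) p]
  simp only [Nat.choose_succ_succ, Nat.choose_zero_right, pow_zero, Nat.cast_add]
  rw [Finset.sum_range_succ (fun i => (-1:ℝ)^(i+1) * ((Nat.choose p i : ℝ) + (Nat.choose p (i+1) : ℝ)) * a (i+1)) p]
  simp only [Nat.choose_succ_self, Nat.cast_zero, add_zero]
  rw [Finset.sum_range_succ (fun i => (-1:ℝ)^i * (Nat.choose p i : ℝ) * a (i+1)) p,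
      Finset.sum_congr rfl (fun x _ => by ring :
        ∀ x ∈ range p, (-1:ℝ)^(x+1) * ((Nat.choose p x : ℝ) + (Nat.choose p (x+1) : ℝ)) * a (x+1)
          = (-1:ℝ)^(x+1) * ((Nat.choose p (x+1)):ℝ) * a (x+1) - (-1:ℝ)^x * ((Nat.choose p x):ℝ) * a (x+1)),
      Finset.sum_sub_distrib]
  push_cast
  ring

lemma neg_one_pow_sub_real (p i : ℕ) (h : i ≤ p) : (-1:ℝ)^(p-i) = (-1)^p * (-1)^i := by
  conv_rhs => rw [show p = (p-i)+i from by omega]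
  rw [pow_add, mul_assoc, ← pow_add, ← two_mul, pow_mul]
  norm_num

lemma neg_one_pow_mul_self_real (p : ℕ) : (-1:ℝ)^p * (-1)^p = 1 := by
  rw [← pow_add, ← two_mul, pow_mul]; norm_num

lemma hasDerivAt_bbZ (m : ℕ) (hm : 1 ≤ m) (j : ℤ) (x : ℝ) (hx : 0 < x) :
    HasDerivAt (fun y => baskakovBasisZ m j y)
      ((m:ℝ) * (baskakovBasisZ (m+1) (j-1) x - baskakovBasisZ (m+1) j x)) x := by
  obtain ⟨s, rfl⟩ : ∃ s, m = s + 1 := ⟨m - 1, by omega⟩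
  rcases lt_or_ge j 0 with hj | hj
  · have h0 : (fun y => baskakovBasisZ (s+1) j y) = fun _ => (0:ℝ) := by
      funext y; simp [baskakovBasisZ, not_le.mpr hj]
    rw [h0, show ((s+1:ℕ):ℝ) * (baskakovBasisZ (s+2) (j-1) x - baskakovBasisZ (s+2) j x) = 0 by
      simp [baskakovBasisZ, not_le.mpr hj, not_le.mpr (by omega : j - 1 < 0)]; intro h; omega]
    exact hasDerivAt_const x 0
  · obtain ⟨t, rfl⟩ : ∃ t : ℕ, j = (t : ℤ) := ⟨j.toNat, (Int.toNat_of_nonneg hj).symm⟩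
    have hfun : (fun y => baskakovBasisZ (s+1) (t:ℤ) y) = baskakovBasis (s+1) t := by
      funext y; simp [baskakovBasisZ]
    rw [hfun]
    rcases Nat.eq_zero_or_pos t with rfl | ht
    · convert hasDerivAt_bb_zero s x hx using 1
      have b1 : baskakovBasisZ (s+1+1) (((0:ℕ):ℤ)-1) x = 0 := by
        norm_num [baskakovBasisZ]
      have b2 : baskakovBasisZ (s+1+1) ((0:ℕ):ℤ) x = baskakovBasis (s+2) 0 x := by
        simp [baskakovBasisZ]
      rw [b1, b2]; push_cast; ring
    · obtain ⟨u, rfl⟩ : ∃ u, t = u + 1 := ⟨t - 1, by omega⟩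
      convert hasDerivAt_bb_succ s u x hx using 1
      have b1 : baskakovBasisZ (s+1+1) (((u+1:ℕ):ℤ)-1) x = baskakovBasis (s+2) u x := by
        rw [show ((u+1:ℕ):ℤ)-1 = (u:ℤ) by push_cast; ring]; simp [baskakovBasisZ]
      have b2 : baskakovBasisZ (s+1+1) ((u+1:ℕ):ℤ) x = baskakovBasis (s+2) (u+1) x := by
        unfold baskakovBasisZ
        rw [if_pos (by positivity)]
        norm_num
      rw [b1, b2]; push_cast; ring

/-- `D^p v_{k,n} = (-1)^p (n)_p Δ^p v_{k-p,n+p}`, i.e.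
`D^p v_{k,n}(x) = (-1)^p (n)_p Σ_{i=0}^p (-1)^{p-i} C(p,i) v_{k-p+i,n+p}(x)`. -/
theorem baskakov_basis_derivative (n : ℕ) (hn : 1 ≤ n) (p k : ℕ) (x : ℝ) (hx : 0 < x) :
    iteratedDeriv p (baskakovBasis n k) x
      = (-1 : ℝ) ^ p * (risingFactorial n p : ℝ) *
          ∑ i ∈ Finset.range (p + 1),
            (-1 : ℝ) ^ (p - i) * (Nat.choose p i : ℝ) *
              baskakovBasisZ (n + p) ((k : ℤ) - p + i) x := by
  induction p generalizing x with
  | zero =>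
      simp [iteratedDeriv_zero, risingFactorial, baskakovBasisZ]
  | succ p ih =>
      rw [iteratedDeriv_succ]
      have hev : deriv (iteratedDeriv p (baskakovBasis n k)) x
          = deriv (fun y => (-1 : ℝ) ^ p * (risingFactorial n p : ℝ) *
              ∑ i ∈ Finset.range (p + 1),
                (-1 : ℝ) ^ (p - i) * (Nat.choose p i : ℝ) *
                  baskakovBasisZ (n + p) ((k : ℤ) - p + i) y) x := by
        apply Filter.EventuallyEq.deriv_eq
        filter_upwards [isOpen_Ioi.mem_nhds (Set.mem_Ioi.mpr hx)] with y hy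
        exact ih y hy
      rw [hev]
      have hm : 1 ≤ n + p := by omega
      have hD : HasDerivAt (fun y => (-1 : ℝ) ^ p * (risingFactorial n p : ℝ) *
              ∑ i ∈ Finset.range (p + 1),
                (-1 : ℝ) ^ (p - i) * (Nat.choose p i : ℝ) *
                  baskakovBasisZ (n + p) ((k : ℤ) - p + i) y)
          ((-1 : ℝ) ^ p * (risingFactorial n p : ℝ) *
              ∑ i ∈ Finset.range (p + 1),
                (-1 : ℝ) ^ (p - i) * (Nat.choose p i : ℝ) *
                  (((n+p : ℕ):ℝ) * (baskakovBasisZ (n+p+1) (((k : ℤ) - p + i)-1) x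
                      - baskakovBasisZ (n+p+1) ((k : ℤ) - p + i) x))) x := by
        apply HasDerivAt.const_mul
        apply HasDerivAt.fun_sum
        intro i _
        exact (hasDerivAt_bbZ (n+p) hm ((k : ℤ) - p + i) x hx).const_mul _
      rw [hD.deriv]
      set a : ℕ → ℝ := fun i => baskakovBasisZ (n+p+1) ((k : ℤ) - (p+1) + i) x with ha
      have hsh : ∀ i : ℕ, baskakovBasisZ (n+p+1) (((k : ℤ) - p + i)-1) x = a i := by
        intro i
        have h : ((k : ℤ) - p + i) - 1 = (k : ℤ) - ((p:ℤ)+1) + i := by push_cast; ring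
        rw [ha, h]
      have hsh2 : ∀ i : ℕ, baskakovBasisZ (n+p+1) ((k : ℤ) - p + i) x = a (i+1) := by
        intro i
        have h : (k : ℤ) - p + i = (k : ℤ) - ((p:ℤ)+1) + ((i:ℤ)+1) := by push_cast; ring
        rw [ha, h]; norm_cast
      have hA : ∀ i : ℕ, baskakovBasisZ (n+(p+1)) ((k : ℤ) - ((p+1:ℕ):ℤ) + i) x = a i := by
        intro i
        have h : (k : ℤ) - ((p+1:ℕ):ℤ) + i = (k : ℤ) - ((p:ℤ)+1) + i := by push_cast; ring
        rw [ha, h, show n+(p+1) = n+p+1 from rfl]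
      have e1 : ∑ i ∈ Finset.range (p + 1),
            (-1 : ℝ) ^ (p - i) * (Nat.choose p i : ℝ) *
              (((n+p : ℕ):ℝ) * (baskakovBasisZ (n+p+1) (((k : ℤ) - p + i)-1) x
                  - baskakovBasisZ (n+p+1) ((k : ℤ) - p + i) x))
          = (-1 : ℝ) ^ p * (((n+p : ℕ):ℝ) *
              ∑ i ∈ Finset.range (p + 1),
                (-1 : ℝ) ^ i * (Nat.choose p i : ℝ) * (a i - a (i+1))) := by
        rw [Finset.mul_sum, Finset.mul_sum]
        apply Finset.sum_congr rfl
        intro i hi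
        rw [hsh i, hsh2 i, neg_one_pow_sub_real p i (by simpa [Nat.lt_succ_iff] using hi)]
        ring
      have e2 : ∑ i ∈ Finset.range (p + 1 + 1),
            (-1 : ℝ) ^ (p + 1 - i) * (Nat.choose (p+1) i : ℝ) *
              baskakovBasisZ (n + (p+1)) ((k : ℤ) - ((p+1:ℕ):ℤ) + i) x
          = (-1 : ℝ) ^ (p+1) *
              ∑ i ∈ Finset.range (p + 2),
                (-1 : ℝ) ^ i * (Nat.choose (p+1) i : ℝ) * a i := by
        rw [Finset.mul_sum]
        apply Finset.sum_congr rfl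
        intro i hi
        rw [hA i, neg_one_pow_sub_real (p+1) i (by simpa [Nat.lt_succ_iff] using hi)]
        ring
      rw [e1]
      rw [e2, alternating_pascal a p,
          show risingFactorial n (p+1) = risingFactorial n p * (n+p) from Finset.prod_range_succ _ p]
      have h1 := neg_one_pow_mul_self_real p
      have h2 := neg_one_pow_mul_self_real (p+1)
      push_cast
      linear_combination ((risingFactorial n p : ℝ) * ((n:ℝ)+p) *
          (∑ i ∈ Finset.range (p + 2), (-1 : ℝ) ^ i * (Nat.choose (p+1) i : ℝ) * a i)) * (h1 - h2)
end

section
/- Let n ≥ 1 and p ≥ 0 be integers and let f : [0,∞) → ℝ be bounded. Then for every real x > 0, the function V_n f is p-times differentiable at x and D^p (V_n f)(x) = (n)_p·Σ_{k=0}^∞ (Δ^p f)_k·v_{k,n+p}(x), where (Δ^p f)_k = Σ_{i=0}^{p} (−1)^{p-i}·binom(p,i)·f((k+i)/n) and (n)_p = n(n+1)⋯(n+p-1) is the rising factorial. -/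
open Filter Topology Finset

lemma summable_choose_geom (M : ℕ) {q : ℝ} (h0 : 0 ≤ q) (h1 : q < 1) :
    Summable (fun k : ℕ => ((M + k).choose k : ℝ) * q ^ k) := by
  have key : Summable (fun k : ℕ => ((M:ℝ) + k) ^ M * q ^ k) := by
    have hexp : ∀ k : ℕ, ((M:ℝ) + k) ^ M * q ^ k
        = ∑ j ∈ Finset.range (M + 1), ((M.choose j : ℝ) * (M:ℝ) ^ j) * ((k:ℝ) ^ (M - j) * q ^ k) := by
      intro k
      rw [add_pow, Finset.sum_mul]
      apply Finset.sum_congr rfl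
      intro j hj; ring
    rw [funext hexp]
    apply summable_sum
    intro j hj
    have : Summable (fun k : ℕ => (k:ℝ) ^ (M - j) * q ^ k) := by
      have : ‖q‖ < 1 := by rwa [Real.norm_eq_abs, abs_of_nonneg h0]
      exact summable_pow_mul_geometric_of_norm_lt_one (M - j) this
    exact this.mul_left _
  apply Summable.of_nonneg_of_le _ _ key
  · intro k; positivity
  · intro k
    apply mul_le_mul_of_nonneg_right _ (by positivity)
    have h1 : (M + k).choose k ≤ (M + k) ^ M := by
      calc (M + k).choose k = (M + k).choose M := Nat.choose_symm_add.symm ▸ by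
              rw [Nat.add_comm M k, Nat.choose_symm_add]
        _ ≤ (M + k) ^ M := Nat.choose_le_pow _ _
    calc ((M + k).choose k : ℝ) ≤ ((M + k : ℕ) ^ M : ℕ) := by exact_mod_cast h1
      _ = ((M:ℝ) + k) ^ M := by push_cast; ring


lemma baskakovBasis_nonneg (n k : ℕ) {x : ℝ} (hx : 0 ≤ x) : 0 ≤ baskakovBasis n k x := by
  unfold baskakovBasis; positivity

lemma baskakovBasis_succ (m k : ℕ) (x : ℝ) :
    baskakovBasis (m + 1) k x = ((m + k).choose k : ℝ) * x ^ k / (1 + x) ^ (m + 1 + k) := by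
  unfold baskakovBasis
  rw [show m + 1 + k - 1 = m + k from by omega]

lemma baskakovBasis_le (m k : ℕ) {x b : ℝ} (hx : 0 ≤ x) (hb : x ≤ b) :
    baskakovBasis (m + 1) k x ≤ ((m + k).choose k : ℝ) * (b / (1 + b)) ^ k := by
  rw [baskakovBasis_succ]
  have h1x : (0:ℝ) < 1 + x := by linarith
  have h1b : (0:ℝ) < 1 + b := by linarith
  have hxq : x / (1 + x) ≤ b / (1 + b) := by
    rw [div_le_div_iff₀ h1x h1b]; nlinarith
  have key : x ^ k / (1 + x) ^ (m + 1 + k) ≤ (b / (1 + b)) ^ k := by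
    have h2 : x ^ k / (1 + x) ^ (m + 1 + k) ≤ (x / (1 + x)) ^ k := by
      rw [div_pow, div_le_div_iff₀ (by positivity) (by positivity)]
      rw [show m + 1 + k = k + (m + 1) from by omega, pow_add]
      have h3 : (1:ℝ) ≤ (1 + x) ^ (m + 1) := one_le_pow₀ (by linarith)
      nlinarith [pow_nonneg hx k, pow_nonneg h1x.le k, pow_pos h1x k,
        mul_le_mul_of_nonneg_left h3 (mul_nonneg (pow_nonneg hx k) (pow_nonneg h1x.le k))]
    exact h2.trans (pow_le_pow_left₀ (by positivity) hxq k)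
  rw [mul_div_assoc]
  exact mul_le_mul_of_nonneg_left key (by positivity)

lemma summable_mul_basis (m : ℕ) (g : ℕ → ℝ) {M : ℝ} (hg : ∀ k, |g k| ≤ M)
    {x : ℝ} (hx : 0 ≤ x) :
    Summable (fun k : ℕ => g k * baskakovBasis (m + 1) k x) := by
  have h1x : (0:ℝ) < 1 + x := by linarith
  have hq0 : 0 ≤ x / (1 + x) := by positivity
  have hq1 : x / (1 + x) < 1 := by rw [div_lt_one h1x]; linarith
  apply Summable.of_norm_bounded (((summable_choose_geom m hq0 hq1).mul_left (max M 0)))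
  intro k
  rw [Real.norm_eq_abs, abs_mul, abs_of_nonneg (baskakovBasis_nonneg _ _ hx), ← mul_assoc]
  have h1 : |g k| ≤ max M 0 := le_trans (hg k) (le_max_left _ _)
  calc |g k| * baskakovBasis (m + 1) k x
      ≤ max M 0 * (((m + k).choose k : ℝ) * (x / (1 + x)) ^ k) := by
        apply mul_le_mul h1 (baskakovBasis_le m k hx le_rfl)
          (baskakovBasis_nonneg _ _ hx) (le_max_right _ _)
    _ = max M 0 * ((m + k).choose k : ℝ) * (x / (1 + x)) ^ k := by ring


lemma hasDerivAt_baskakovBasis (m k : ℕ) {y : ℝ} (hy : 0 < y) :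
    HasDerivAt (baskakovBasis (m + 1) k)
      (((m : ℝ) + 1) *
        ((if k = 0 then 0 else baskakovBasis (m + 2) (k - 1) y) - baskakovBasis (m + 2) k y)) y := by
  have h1y : (0:ℝ) < 1 + y := by linarith
  have hne : (1 + y) ≠ 0 := ne_of_gt h1y
  have heq : baskakovBasis (m + 1) k = fun x => ((m + k).choose k : ℝ) * x ^ k / (1 + x) ^ (m + 1 + k) :=
    funext fun x => baskakovBasis_succ m k x
  rw [heq]
  have hnum : HasDerivAt (fun x : ℝ => ((m + k).choose k : ℝ) * x ^ k)
      (((m + k).choose k : ℝ) * ((k : ℝ) * y ^ (k - 1))) y := (hasDerivAt_pow k y).const_mul _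
  have hden : HasDerivAt (fun x : ℝ => (1 + x) ^ (m + 1 + k))
      (((m + 1 + k : ℕ) : ℝ) * (1 + y) ^ (m + k) * 1) y := by
    have h := ((hasDerivAt_id y).const_add 1).pow (m + 1 + k)
    rwa [show m + 1 + k - 1 = m + k from by omega] at h
  have hd := hnum.div hden (by positivity)
  refine hd.congr_deriv (Eq.symm ?_)
  rcases k with _ | j
  · rw [if_pos rfl]
    rw [baskakovBasis_succ]
    simp only [Nat.choose_zero_right, Nat.cast_one, Nat.cast_zero, pow_zero]
    field_simp
    push_cast
    ring
  · simp only [Nat.succ_ne_zero, if_neg, Nat.add_sub_cancel]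
    rw [baskakovBasis_succ, baskakovBasis_succ]
    have hA : ((m:ℝ) + 1) * ((m + 1 + j).choose j : ℝ) = ((j:ℝ) + 1) * ((m + (j+1)).choose (j+1) : ℝ) := by
      have h2 := Nat.choose_succ_right_eq (m + 1 + j) j
      rw [show m + 1 + j - j = m + 1 from by omega] at h2
      have h2R : ((m + 1 + j).choose (j+1) : ℝ) * ((j:ℝ)+1) = ((m + 1 + j).choose j : ℝ) * ((m:ℝ)+1) := by
        exact_mod_cast h2
      rw [show m + (j+1) = m + 1 + j from by omega]
      linarith [h2R]
    have hB : ((m:ℝ) + 1) * ((m + 1 + (j+1)).choose (j+1) : ℝ)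
        = ((m:ℝ) + (j:ℝ) + 2) * ((m + (j+1)).choose (j+1) : ℝ) := by
      have h1 := Nat.add_one_mul_choose_eq (m + j + 1) (j + 1)
      have h2 := Nat.choose_succ_right_eq (m + j + 1 + 1) (j + 1)
      rw [show m + j + 1 + 1 - (j + 1) = m + 1 from by omega] at h2
      have h3 : (m + j + 1 + 1) * (m + j + 1).choose (j+1) = (m + j + 1 + 1).choose (j+1) * (m+1) :=
        h1.trans h2
      have h3R : ((m:ℝ) + (j:ℝ) + 2) * ((m + j + 1).choose (j+1) : ℝ)
          = ((m + j + 1 + 1).choose (j+1) : ℝ) * ((m:ℝ) + 1) := by exact_mod_cast h3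
      rw [show m + 1 + (j+1) = m + j + 1 + 1 from by omega, show m + (j+1) = m + j + 1 from by omega]
      linarith [h3R]
    calc ((m:ℝ) + 1) * (((m + 1 + j).choose j : ℝ) * y ^ j / (1 + y) ^ (m + 1 + 1 + j)
            - ((m + 1 + (j+1)).choose (j+1) : ℝ) * y ^ (j+1) / (1 + y) ^ (m + 1 + 1 + (j+1)))
        = (((m:ℝ) + 1) * ((m + 1 + j).choose j : ℝ)) * (y ^ j / (1 + y) ^ (m + 1 + 1 + j))
            - (((m:ℝ) + 1) * ((m + 1 + (j+1)).choose (j+1) : ℝ)) * (y ^ (j+1) / (1 + y) ^ (m + 1 + 1 + (j+1))) := by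
          ring
      _ = (((j:ℝ) + 1) * ((m + (j+1)).choose (j+1) : ℝ)) * (y ^ j / (1 + y) ^ (m + 1 + 1 + j))
            - (((m:ℝ) + (j:ℝ) + 2) * ((m + (j+1)).choose (j+1) : ℝ)) * (y ^ (j+1) / (1 + y) ^ (m + 1 + 1 + (j+1))) := by
          rw [hA, hB]
      _ = (((m + (j+1)).choose (j+1) : ℝ) * (((j:ℕ)+1 : ℕ) * y ^ (j + 1 - 1)) * (1 + y) ^ (m + 1 + (j+1))
            - ((m + (j+1)).choose (j+1) : ℝ) * y ^ (j+1) * (((m + 1 + (j+1) : ℕ) : ℝ) * (1 + y) ^ (m + (j+1)) * 1))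
            / ((1 + y) ^ (m + 1 + (j+1))) ^ 2 := by
          push_cast [Nat.add_sub_cancel]
          field_simp
          ring


noncomputable def Sb (m : ℕ) (g : ℕ → ℝ) (x : ℝ) : ℝ := ∑' k : ℕ, g k * baskakovBasis m k x

lemma hasDerivAt_Sb (m : ℕ) (g : ℕ → ℝ) {M : ℝ} (hg : ∀ k, |g k| ≤ M) {x : ℝ} (hx : 0 < x) :
    HasDerivAt (Sb (m + 1) g) (((m : ℝ) + 1) * Sb (m + 2) (fun k => g (k + 1) - g k) x) x := by
  classical
  set b : ℝ := x + 1 with hb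
  have hb0 : 0 < b := by linarith
  set q : ℝ := b / (1 + b) with hq
  have hq0 : 0 ≤ q := by positivity
  have hq1 : q < 1 := by rw [hq, div_lt_one (by linarith)]; linarith
  set M' : ℝ := max M 0 with hM'
  have hgM' : ∀ k, |g k| ≤ M' := fun k => (hg k).trans (le_max_left _ _)
  -- the bounding sequence
  set w2 : ℕ → ℝ := fun k => ((m + 1 + k).choose k : ℝ) * q ^ k with hw2
  set w1 : ℕ → ℝ := fun k => if k = 0 then 0 else ((m + 1 + (k - 1)).choose (k - 1) : ℝ) * q ^ (k - 1)
    with hw1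
  have hsw2 : Summable w2 := summable_choose_geom (m + 1) hq0 hq1
  have hsw1 : Summable w1 := by
    apply (summable_nat_add_iff 1).1
    have : (fun n : ℕ => w1 (n + 1)) = w2 := by
      funext n; simp [hw1, hw2]
    rw [this]; exact hsw2
  set u : ℕ → ℝ := fun k => M' * ((m : ℝ) + 1) * (w1 k + w2 k) with hu
  have hsu : Summable u := ((hsw1.add hsw2).mul_left _)
  set t : Set ℝ := Set.Ioo 0 b with ht
  have hxt : x ∈ t := ⟨hx, by simp [hb]⟩
  have key := hasDerivAt_tsum_of_isPreconnected (F := ℝ) hsu isOpen_Ioo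
    (isPreconnected_Ioo)
    (g := fun k y => g k * baskakovBasis (m + 1) k y)
    (g' := fun k y => g k * (((m : ℝ) + 1) *
      ((if k = 0 then 0 else baskakovBasis (m + 2) (k - 1) y) - baskakovBasis (m + 2) k y)))
    (fun k y hy => (hasDerivAt_baskakovBasis m k hy.1).const_mul (g k))
    (fun k y hy => ?_) hxt (summable_mul_basis m g hg hx.le) hxt
  · -- rearrange the tsum of derivatives
    set w : ℕ → ℝ := fun k => baskakovBasis (m + 2) k x with hw
    have hwnn : ∀ k, 0 ≤ w k := fun k => baskakovBasis_nonneg _ _ hx.le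
    set A : ℕ → ℝ := fun k => g k * (if k = 0 then 0 else w (k - 1)) with hA
    set B : ℕ → ℝ := fun k => g k * w k with hB
    have hsB : Summable B := summable_mul_basis (m + 1) g hg hx.le
    have hsA' : Summable (fun k => g (k + 1) * w k) :=
      summable_mul_basis (m + 1) (fun k => g (k + 1)) (fun k => hg (k + 1)) hx.le
    have hsA : Summable A := by
      apply (summable_nat_add_iff 1).1
      have : (fun n : ℕ => A (n + 1)) = fun k => g (k + 1) * w k := by
        funext n; simp [hA]
      rw [this]; exact hsA'
    have e1 : (fun k : ℕ => g k * (((m : ℝ) + 1) *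
        ((if k = 0 then 0 else baskakovBasis (m + 2) (k - 1) x) - baskakovBasis (m + 2) k x)))
        = fun k => ((m : ℝ) + 1) * (A k - B k) := by
      funext k
      rcases eq_or_ne k 0 with rfl | hk
      · simp [hA, hB, hw]; ring
      · simp only [hA, hB, hw, if_neg hk]; ring
    rw [e1] at key
    have h2 : ∑' k, ((m:ℝ) + 1) * (A k - B k)
        = ((m:ℝ) + 1) * Sb (m + 2) (fun k => g (k + 1) - g k) x := by
      rw [tsum_mul_left]
      congr 1
      rw [Summable.tsum_sub hsA hsB]
      have hAsum : ∑' k, A k = ∑' k, g (k + 1) * w k := by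
        rw [Summable.tsum_eq_zero_add hsA]
        have hA0 : A 0 = 0 := by simp [hA]
        have hAk : ∀ k : ℕ, A (k + 1) = g (k + 1) * w k := by intro k; simp [hA]
        rw [hA0, zero_add]
        exact tsum_congr hAk
      rw [hAsum]
      unfold Sb
      rw [show (fun k : ℕ => (g (k + 1) - g k) * baskakovBasis (m + 2) k x)
          = fun k => g (k + 1) * w k - B k from by funext k; simp only [hB, hw]; ring]
      rw [Summable.tsum_sub hsA' hsB]
    rw [h2] at key; exact key
  · -- the norm bound
    have hynn : (0:ℝ) ≤ y := hy.1.le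
    have hyb : y ≤ b := hy.2.le
    have hbnd1 : |if k = 0 then 0 else baskakovBasis (m + 2) (k - 1) y| ≤ w1 k := by
      rcases eq_or_ne k 0 with rfl | hk
      · simp [hw1]
      · have hwk : w1 k = ((m + 1 + (k - 1)).choose (k - 1) : ℝ) * q ^ (k - 1) := by
          rw [hw1]; simp [hk]
        rw [hwk, if_neg hk, abs_of_nonneg (baskakovBasis_nonneg _ _ hynn)]
        exact baskakovBasis_le (m + 1) (k - 1) hynn hyb
    have hbnd2 : |baskakovBasis (m + 2) k y| ≤ w2 k := by
      rw [abs_of_nonneg (baskakovBasis_nonneg _ _ hynn)]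
      exact baskakovBasis_le (m + 1) k hynn hyb
    rw [Real.norm_eq_abs, abs_mul, abs_mul]
    have h1 : |g k| ≤ M' := hgM' k
    have h2 : |((m:ℝ) + 1)| = (m:ℝ) + 1 := abs_of_nonneg (by positivity)
    rw [h2]
    show _ ≤ M' * ((m:ℝ) + 1) * (w1 k + w2 k)
    have hw1nn : 0 ≤ w1 k := by
      rcases eq_or_ne k 0 with rfl | hk
      · simp [hw1]
      · have hwk : w1 k = ((m + 1 + (k - 1)).choose (k - 1) : ℝ) * q ^ (k - 1) := by
          rw [hw1]; simp [hk]
        rw [hwk]; positivity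
    calc |g k| * (((m:ℝ) + 1) * |(if k = 0 then 0 else baskakovBasis (m + 2) (k - 1) y)
          - baskakovBasis (m + 2) k y|)
        ≤ M' * (((m:ℝ) + 1) * (w1 k + w2 k)) := by
          apply mul_le_mul h1 _ (by positivity) (le_trans (abs_nonneg _) h1)
          apply mul_le_mul_of_nonneg_left _ (by positivity)
          calc |(if k = 0 then 0 else baskakovBasis (m + 2) (k - 1) y) - baskakovBasis (m + 2) k y|
              ≤ |(if k = 0 then 0 else baskakovBasis (m + 2) (k - 1) y)|
                  + |baskakovBasis (m + 2) k y| := abs_sub _ _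
            _ ≤ w1 k + w2 k := add_le_add hbnd1 hbnd2
      _ = M' * ((m:ℝ) + 1) * (w1 k + w2 k) := by ring


lemma contDiff_Sb (p : ℕ) : ∀ (m : ℕ) (g : ℕ → ℝ) (M : ℝ), (∀ k, |g k| ≤ M) →
    ContDiffOn ℝ p (Sb (m + 1) g) (Set.Ioi 0) ∧
    ∀ x : ℝ, 0 < x → iteratedDeriv p (Sb (m + 1) g) x
      = (risingFactorial (m + 1) p : ℝ) * Sb (m + 1 + p) ((fwdDiff 1)^[p] g) x := by
  induction p with
  | zero =>
    intro m g M hg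
    refine ⟨?_, ?_⟩
    · rw [show ((0 : ℕ) : WithTop ℕ∞) = 0 from rfl, contDiffOn_zero]
      intro y hy
      exact ((hasDerivAt_Sb m g hg hy).differentiableAt.continuousAt).continuousWithinAt
    · intro x hx
      simp [risingFactorial, iteratedDeriv_zero]
  | succ p ih =>
    intro m g M hg
    set c : ℝ := (m : ℝ) + 1 with hc
    set g' : ℕ → ℝ := c • (fwdDiff 1 g) with hg'def
    have hg' : ∀ k, |g' k| ≤ c * (2 * max M 0) := by
      intro k
      have h1 : |g k| ≤ max M 0 := (hg k).trans (le_max_left _ _)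
      have h2 : |g (k+1)| ≤ max M 0 := (hg (k+1)).trans (le_max_left _ _)
      have : g' k = c * (g (k + 1) - g k) := rfl
      rw [this, abs_mul, abs_of_nonneg (show (0:ℝ) ≤ c from by rw [hc]; positivity)]
      apply mul_le_mul_of_nonneg_left _ (by rw [hc]; positivity)
      calc |g (k+1) - g k| ≤ |g (k+1)| + |g k| := abs_sub _ _
        _ ≤ 2 * max M 0 := by linarith
    have hderiv : ∀ y ∈ Set.Ioi (0:ℝ), deriv (Sb (m + 1) g) y = Sb (m + 2) g' y := by
      intro y hy
      rw [(hasDerivAt_Sb m g hg hy).deriv]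
      unfold Sb
      rw [← tsum_mul_left]
      apply tsum_congr
      intro k
      have : g' k = c * (g (k + 1) - g k) := rfl
      rw [this]; ring
    obtain ⟨ihC, ihD⟩ := ih (m + 1) g' _ hg'
    constructor
    · rw [show (((p + 1 : ℕ)) : WithTop ℕ∞) = (p : WithTop ℕ∞) + 1 from by push_cast; rfl]
      rw [contDiffOn_succ_iff_deriv_of_isOpen isOpen_Ioi]
      refine ⟨fun y hy => ((hasDerivAt_Sb m g hg hy).differentiableAt).differentiableWithinAt,
        ?_, ?_⟩
      · intro h; simp at h
      · exact ihC.congr hderiv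
    · intro x hx
      rw [iteratedDeriv_succ']
      have hEE : deriv (Sb (m + 1) g) =ᶠ[𝓝 x] Sb (m + 2) g' := by
        filter_upwards [Ioi_mem_nhds hx] with y hy using hderiv y hy
      rw [hEE.iteratedDeriv_eq p, ihD x hx]
      have hiter : (fwdDiff 1)^[p] g' = c • ((fwdDiff 1)^[p + 1] g) := by
        rw [hg'def, fwdDiff_iter_const_smul, Function.iterate_succ_apply]
      have hsb : Sb (m + 1 + 1 + p) ((fwdDiff 1)^[p] g') x
          = c * Sb (m + 1 + 1 + p) ((fwdDiff 1)^[p + 1] g) x := by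
        unfold Sb
        rw [← tsum_mul_left]
        apply tsum_congr
        intro k
        rw [hiter]
        show c * ((fwdDiff 1)^[p+1] g) k * _ = _
        ring
      rw [hsb]
      have hrf : (risingFactorial (m + 1) (p + 1) : ℝ) = c * risingFactorial (m + 1 + 1) p := by
        unfold risingFactorial
        rw [Finset.prod_range_succ']
        push_cast
        rw [hc]
        have : ∀ i ∈ Finset.range p, ((m : ℝ) + 1 + (i + 1)) = ((m : ℝ) + 1 + 1 + i) := by
          intro i _; ring
        rw [Finset.prod_congr rfl fun i hi => by push_cast; exact this i hi]
        push_cast; ring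
      rw [hrf, show m + 1 + 1 + p = m + 1 + (p + 1) from by omega]
      ring


/-- for bounded `f`, `V_n f` is `p`-times differentiable on `(0,∞)` and
`D^p (V_n f)(x) = (n)_p Σ_k (Δ^p f)_k v_{k,n+p}(x)`. -/
theorem baskakov_derivative_formula (n p : ℕ) (hn : 1 ≤ n) (f : ℝ → ℝ)
    (hf : ∃ M : ℝ, ∀ t : ℝ, 0 ≤ t → |f t| ≤ M) (x : ℝ) (hx : 0 < x) :
    ContDiffAt ℝ p (baskakov n f) x ∧
    iteratedDeriv p (baskakov n f) x
      = (risingFactorial n p : ℝ) *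
          ∑' k : ℕ,
            (∑ i ∈ Finset.range (p + 1),
              (-1 : ℝ) ^ (p - i) * (Nat.choose p i : ℝ) * f (((k : ℝ) + i) / n)) *
            baskakovBasis (n + p) k x := by
  obtain ⟨m, rfl⟩ : ∃ m, n = m + 1 := ⟨n - 1, by omega⟩
  obtain ⟨M, hM⟩ := hf
  set g : ℕ → ℝ := fun k => f ((k : ℝ) / (m + 1 : ℕ)) with hgdef
  have hg : ∀ k, |g k| ≤ M := fun k => hM _ (by positivity)
  have hbask : baskakov (m + 1) f = Sb (m + 1) g := rfl
  obtain ⟨hC, hD⟩ := contDiff_Sb p m g M hg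
  constructor
  · rw [hbask]
    exact hC.contDiffAt (Ioi_mem_nhds hx)
  · rw [hbask, hD x hx]
    congr 1
    unfold Sb
    apply tsum_congr
    intro k
    congr 1
    rw [fwdDiff_iter_eq_sum_shift]
    apply Finset.sum_congr rfl
    intro i hi
    have : g (k + i • 1) = f (((k : ℝ) + i) / (m + 1 : ℕ)) := by
      simp only [smul_eq_mul, mul_one, hgdef]
      congr 1
      push_cast
      ring
    rw [this, zsmul_eq_mul]
    push_cast
    ring
end
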